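/- arXiv:1908.11725 — 6 statements merged into one kernel-verified Lean document; each statement's English description precedes it below -/
import Mathlib

section
/- Let n ≥ 1, let Q : ℝ → Mₙ(ℂ) be four times continuously differentiable, and let x : ℝ → ℂⁿ be differentiable with x'(u) = Q(u)·x(u) for all u ∈ ℝ. Fix t ∈ ℝ and s ∈ ℝ, and define the one-step transition matrix T(τ) = I + τ·Q(t) + τ²·T₂ + τ³·T₃ + τ⁴·T₄, where T₂, T₃, T₄ are built from Q and its derivatives at t as in the context. Then the scheme is consistent of fourth order: x(t + s·τ) − T(τ)·x(t + (s−1)·τ) = O(τ⁵) as τ → 0. -/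
open Matrix Filter Asymptotics
open scoped Topology

attribute [local instance] Matrix.normedAddCommGroup Matrix.normedSpace

namespace FOC
variable {n : ℕ}

noncomputable def mulCLM (n : ℕ) : Matrix (Fin n) (Fin n) ℂ →L[ℝ]
    Matrix (Fin n) (Fin n) ℂ →L[ℝ] Matrix (Fin n) (Fin n) ℂ :=
  LinearMap.toContinuousLinearMap
    { toFun := fun A => LinearMap.toContinuousLinearMap (LinearMap.mulLeft ℝ A)
      map_add' := by intro A B; ext C; simp [add_mul]
      map_smul' := by intro r A; ext C; simp [smul_mul_assoc] }

@[simp] lemma mulCLM_apply (A B : Matrix (Fin n) (Fin n) ℂ) : mulCLM n A B = A * B := rfl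

noncomputable def mulVecCLM (n : ℕ) : Matrix (Fin n) (Fin n) ℂ →L[ℝ]
    (Fin n → ℂ) →L[ℝ] (Fin n → ℂ) :=
  LinearMap.toContinuousLinearMap
    { toFun := fun A => LinearMap.toContinuousLinearMap ((Matrix.mulVecLin A).restrictScalars ℝ)
      map_add' := by intro A B; ext v; simp [Matrix.add_mulVec]
      map_smul' := by intro r A; ext v; simp [Matrix.smul_mulVec] }

@[simp] lemma mulVecCLM_apply (A : Matrix (Fin n) (Fin n) ℂ) (v : Fin n → ℂ) :
    mulVecCLM n A v = A.mulVec v := rfl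

lemma hasDerivAt_matMul {f g : ℝ → Matrix (Fin n) (Fin n) ℂ}
    {f' g' : Matrix (Fin n) (Fin n) ℂ} {u : ℝ}
    (hf : HasDerivAt f f' u) (hg : HasDerivAt g g' u) :
    HasDerivAt (fun v => f v * g v) (f' * g u + f u * g') u := by
  letI : NormedAddCommGroup (Matrix (Fin n) (Fin n) ℂ →L[ℝ] Matrix (Fin n) (Fin n) ℂ) :=
    ContinuousLinearMap.toNormedAddCommGroup
  letI : NormedSpace ℝ (Matrix (Fin n) (Fin n) ℂ →L[ℝ] Matrix (Fin n) (Fin n) ℂ) :=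
    ContinuousLinearMap.toNormedSpace
  have h1 : HasDerivAt (fun v => mulCLM n (f v)) (mulCLM n f') u :=
    by have h0 := (mulCLM n).hasFDerivAt.comp_hasDerivAt u hf; exact h0
  exact h1.clm_apply hg

lemma hasDerivAt_matMulVec {f : ℝ → Matrix (Fin n) (Fin n) ℂ} {g : ℝ → Fin n → ℂ}
    {f' : Matrix (Fin n) (Fin n) ℂ} {g' : Fin n → ℂ} {u : ℝ}
    (hf : HasDerivAt f f' u) (hg : HasDerivAt g g' u) :
    HasDerivAt (fun v => (f v).mulVec (g v)) (f'.mulVec (g u) + (f u).mulVec g') u := by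
  have h1 : HasDerivAt (fun v => mulVecCLM n (f v)) (mulVecCLM n f') u :=
    by have h0 := (mulVecCLM n).hasFDerivAt.comp_hasDerivAt u hf; exact h0
  simpa using h1.clm_apply hg

lemma HasDerivAt.congr_deriv {E : Type*} [NormedAddCommGroup E] [NormedSpace ℝ E]
    {f : ℝ → E} {d d' : E} {u : ℝ} (h : HasDerivAt f d u) (e : d = d') :
    HasDerivAt f d' u := e ▸ h

lemma isBigO_succ_of_deriv {E : Type*} [NormedAddCommGroup E] [NormedSpace ℝ E]
    {h h' : ℝ → E} {k : ℕ}
    (hd : ∀ u : ℝ, HasDerivAt h (h' u) u) (h0 : h 0 = 0)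
    (hO : h' =O[𝓝 (0:ℝ)] fun τ => τ ^ k) :
    h =O[𝓝 (0:ℝ)] fun τ => τ ^ (k + 1) := by
  obtain ⟨C, hC0, hC⟩ := hO.exists_pos
  rw [isBigOWith_iff] at hC
  obtain ⟨δ, hδ0, hδ⟩ := Metric.eventually_nhds_iff_ball.mp hC
  rw [isBigO_iff]
  refine ⟨C, Metric.eventually_nhds_iff_ball.mpr ⟨δ, hδ0, fun τ hτ => ?_⟩⟩
  have hseg : ∀ u ∈ segment ℝ (0:ℝ) τ, ‖h' u‖ ≤ C * ‖τ‖ ^ k := by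
    intro u hu
    obtain ⟨a, b, ha, hb, hab, rfl⟩ := hu
    have hu' : ‖a • (0:ℝ) + b • τ‖ ≤ ‖τ‖ := by
      simp only [smul_zero, zero_add, smul_eq_mul, Real.norm_eq_abs]
      rw [mul_zero, zero_add, abs_mul]
      calc |b| * |τ| ≤ 1 * |τ| := by
            apply mul_le_mul_of_nonneg_right _ (abs_nonneg τ)
            rw [abs_of_nonneg hb]; linarith
        _ = |τ| := one_mul _
    have hmem : a • (0:ℝ) + b • τ ∈ Metric.ball (0:ℝ) δ := by
      simp only [Metric.mem_ball, dist_zero_right] at *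
      exact lt_of_le_of_lt hu' hτ
    calc ‖h' (a • (0:ℝ) + b • τ)‖ ≤ C * ‖(a • (0:ℝ) + b • τ) ^ k‖ := hδ _ hmem
      _ ≤ C * ‖τ‖ ^ k := by
          rw [norm_pow]
          exact mul_le_mul_of_nonneg_left (pow_le_pow_left₀ (norm_nonneg _) hu' k) hC0.le
  have hconv : Convex ℝ (segment ℝ (0:ℝ) τ) := convex_segment _ _
  have := hconv.norm_image_sub_le_of_norm_hasDerivWithin_le
    (fun u hu => (hd u).hasDerivWithinAt) hseg (left_mem_segment ℝ 0 τ) (right_mem_segment ℝ 0 τ)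
  rw [h0, sub_zero, sub_zero] at this
  calc ‖h τ‖ ≤ C * ‖τ‖ ^ k * ‖τ‖ := this
    _ = C * ‖τ ^ (k+1)‖ := by rw [norm_pow, pow_succ]; ring

end FOC

open FOC

set_option maxHeartbeats 2000000 in
/-- fourth-order consistency of the one-step scheme with transition matrix
`T(τ) = I + τ·Q(t) + τ²·T₂ + τ³·T₃ + τ⁴·T₄`. -/
theorem fourth_order_consistency
    {n : ℕ} (hn : 1 ≤ n)
    (Q : ℝ → Matrix (Fin n) (Fin n) ℂ) (hQ : ContDiff ℝ 4 Q)
    (x : ℝ → Fin n → ℂ)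
    (hx : ∀ u : ℝ, HasDerivAt x ((Q u).mulVec (x u)) u)
    (t s : ℝ)
    (Q1 Q1' Q1'' Q1''' Q2 Q3 Q4 T2 T3 T4 : Matrix (Fin n) (Fin n) ℂ)
    (hQ1 : Q1 = Q t)
    (hQ1' : Q1' = iteratedDeriv 1 Q t)
    (hQ1'' : Q1'' = iteratedDeriv 2 Q t)
    (hQ1''' : Q1''' = iteratedDeriv 3 Q t)
    (hQ2 : Q2 = Q1' + Q1 ^ 2)
    (hQ3 : Q3 = Q1'' + 2 • (Q1' * Q1) + Q1 * Q1' + Q1 ^ 3)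
    (hQ4 : Q4 = Q1''' + 3 • (Q1'' * Q1) + Q1 * Q1'' + 3 • (Q1' ^ 2)
      + 3 • (Q1' * Q1 ^ 2) + 2 • (Q1 * Q1' * Q1) + Q1 ^ 2 * Q1' + Q1 ^ 4)
    (hT2 : T2 = ((2 * s - 1) / 2 : ℝ) • Q2 - (s - 1 : ℝ) • Q1 ^ 2)
    (hT3 : T3 = ((3 * s ^ 2 - 3 * s + 1) / 6 : ℝ) • Q3
      - ((s - 1) ^ 2 / 2 : ℝ) • (Q1 * Q2)
      - ((2 * s - 1) * (s - 1) / 2 : ℝ) • (Q2 * Q1)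
      + ((s - 1) ^ 2 : ℝ) • Q1 ^ 3)
    (hT4 : T4 = ((2 * s - 1) * (2 * s ^ 2 - 2 * s + 1) / 24 : ℝ) • Q4
      - ((s - 1) ^ 3 / 6 : ℝ) • (Q1 * Q3)
      - ((s - 1) ^ 2 / 2 : ℝ) • (T2 * Q2)
      - (s - 1 : ℝ) • (T3 * Q1)) :
    (fun τ : ℝ =>
        x (t + s * τ) -
          (1 + τ • Q1 + τ ^ 2 • T2 + τ ^ 3 • T3 + τ ^ 4 • T4).mulVec
            (x (t + (s - 1) * τ)))
      =O[𝓝 0] fun τ => τ ^ 5 := by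
  -- smoothness of Q and its derivatives
  have hQd : Differentiable ℝ Q := hQ.differentiable (by norm_num)
  have step : ∀ (m : ℕ) (f : ℝ → Matrix (Fin n) (Fin n) ℂ),
      ContDiff ℝ (m + 1 : ℕ) f → ContDiff ℝ (m : ℕ) (deriv f) := by
    intro m f hf
    rw [show ((m + 1 : ℕ) : WithTop ℕ∞) = (m : WithTop ℕ∞) + 1 by push_cast; rfl] at hf
    exact (contDiff_succ_iff_deriv.mp hf).2.2
  have hQ4' : ContDiff ℝ (4 : ℕ) Q := by exact_mod_cast hQ
  have hD1c : ContDiff ℝ (3 : ℕ) (deriv Q) := step 3 Q hQ4'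
  have hD2c : ContDiff ℝ (2 : ℕ) (deriv (deriv Q)) := step 2 _ hD1c
  have hD3c : ContDiff ℝ (1 : ℕ) (deriv (deriv (deriv Q))) := step 1 _ hD2c
  have hD1d : Differentiable ℝ (deriv Q) := hD1c.differentiable (by norm_num)
  have hD2d : Differentiable ℝ (deriv (deriv Q)) := hD2c.differentiable (by norm_num)
  have hD3d : Differentiable ℝ (deriv (deriv (deriv Q))) := hD3c.differentiable (by norm_num)
  -- trajectory operator functions
  set D1 : ℝ → Matrix (Fin n) (Fin n) ℂ := deriv Q with hD1eq
  set D2 : ℝ → Matrix (Fin n) (Fin n) ℂ := deriv (deriv Q) with hD2eq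
  set D3 : ℝ → Matrix (Fin n) (Fin n) ℂ := deriv (deriv (deriv Q)) with hD3eq
  set A2 : ℝ → Matrix (Fin n) (Fin n) ℂ := fun u => D1 u + Q u * Q u with hA2eq
  set A3 : ℝ → Matrix (Fin n) (Fin n) ℂ :=
    fun u => D2 u + (D1 u * Q u + D1 u * Q u) + Q u * D1 u + Q u * (Q u * Q u) with hA3eq
  set A4 : ℝ → Matrix (Fin n) (Fin n) ℂ :=
    fun u => D3 u + (D2 u * Q u + D2 u * Q u + D2 u * Q u) + Q u * D2 u
      + (D1 u * D1 u + D1 u * D1 u + D1 u * D1 u)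
      + (D1 u * (Q u * Q u) + D1 u * (Q u * Q u) + D1 u * (Q u * Q u))
      + (Q u * (D1 u * Q u) + Q u * (D1 u * Q u)) + Q u * (Q u * D1 u)
      + Q u * (Q u * (Q u * Q u)) with hA4eq
  set X1 : ℝ → Fin n → ℂ := fun u => (Q u).mulVec (x u) with hX1eq
  set X2 : ℝ → Fin n → ℂ := fun u => (A2 u).mulVec (x u) with hX2eq
  set X3 : ℝ → Fin n → ℂ := fun u => (A3 u).mulVec (x u) with hX3eq
  set X4 : ℝ → Fin n → ℂ := fun u => (A4 u).mulVec (x u) with hX4eq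
  have hx' : ∀ u : ℝ, HasDerivAt x (X1 u) u := hx
  have hX1d : ∀ u : ℝ, HasDerivAt X1 (X2 u) u := by
    intro u
    refine (hasDerivAt_matMulVec ((hQd u).hasDerivAt) (hx' u)).congr_deriv ?_
    simp only [hX1eq, hX2eq, hA2eq, Matrix.mulVec_mulVec, ← Matrix.add_mulVec, hD1eq]
    rfl
  have hX2d : ∀ u : ℝ, HasDerivAt X2 (X3 u) u := by
    intro u
    have hA2 : HasDerivAt A2 (D2 u + (D1 u * Q u + Q u * D1 u)) u := by
      refine HasDerivAt.add ?_ (hasDerivAt_matMul ((hQd u).hasDerivAt) ((hQd u).hasDerivAt))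
      exact (hD1d u).hasDerivAt
    refine (hasDerivAt_matMulVec hA2 (hx' u)).congr_deriv ?_
    simp only [hX1eq, hX3eq, hA2eq, hA3eq, Matrix.mulVec_mulVec, ← Matrix.add_mulVec]
    congr 1
    noncomm_ring
  have hX3d : ∀ u : ℝ, HasDerivAt X3 (X4 u) u := by
    intro u
    have hq := (hQd u).hasDerivAt
    have h1 : HasDerivAt D1 (D2 u) u := (hD1d u).hasDerivAt
    have h2 : HasDerivAt D2 (D3 u) u := (hD2d u).hasDerivAt
    have hA3 : HasDerivAt A3
        (D3 u + ((D2 u * Q u + D1 u * D1 u) + (D2 u * Q u + D1 u * D1 u))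
          + (D1 u * D1 u + Q u * D2 u)
          + (D1 u * (Q u * Q u) + Q u * (D1 u * Q u + Q u * D1 u))) u := by
      exact ((h2.add ((hasDerivAt_matMul h1 hq).add (hasDerivAt_matMul h1 hq))).add
        (hasDerivAt_matMul hq h1)).add (hasDerivAt_matMul hq (hasDerivAt_matMul hq hq))
    refine (hasDerivAt_matMulVec hA3 (hx' u)).congr_deriv ?_
    simp only [hX1eq, hX4eq, hA3eq, hA4eq, Matrix.mulVec_mulVec, ← Matrix.add_mulVec]
    congr 1
    noncomm_ring
  -- differentiability of X4 at t
  have hm : ∀ (f g : ℝ → Matrix (Fin n) (Fin n) ℂ), DifferentiableAt ℝ f t →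
      DifferentiableAt ℝ g t → DifferentiableAt ℝ (fun u => f u * g u) t :=
    fun f g hf hg => (hasDerivAt_matMul hf.hasDerivAt hg.hasDerivAt).differentiableAt
  have hA4diff : DifferentiableAt ℝ A4 t := by
    rw [hA4eq]
    refine (((((((hD3d t).add ?_).add ?_).add ?_).add ?_).add ?_).add ?_).add ?_
    · exact ((hm _ _ (hD2d t) (hQd t)).add (hm _ _ (hD2d t) (hQd t))).add (hm _ _ (hD2d t) (hQd t))
    · exact hm _ _ (hQd t) (hD2d t)
    · exact ((hm _ _ (hD1d t) (hD1d t)).add (hm _ _ (hD1d t) (hD1d t))).add (hm _ _ (hD1d t) (hD1d t))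
    · exact ((hm _ _ (hD1d t) (hm _ _ (hQd t) (hQd t))).add
        (hm _ _ (hD1d t) (hm _ _ (hQd t) (hQd t)))).add (hm _ _ (hD1d t) (hm _ _ (hQd t) (hQd t)))
    · exact (hm _ _ (hQd t) (hm _ _ (hD1d t) (hQd t))).add (hm _ _ (hQd t) (hm _ _ (hD1d t) (hQd t)))
    · exact hm _ _ (hQd t) (hm _ _ (hQd t) (hD1d t))
    · exact hm _ _ (hQd t) (hm _ _ (hQd t) (hm _ _ (hQd t) (hQd t)))
  have hX4diff : DifferentiableAt ℝ X4 t := by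
    rw [hX4eq]
    exact (hasDerivAt_matMulVec hA4diff.hasDerivAt (hx' t)).differentiableAt
  -- composition with affine maps
  have hcomp : ∀ (a : ℝ) (X X' : ℝ → Fin n → ℂ), (∀ u, HasDerivAt X (X' u) u) →
      ∀ τ : ℝ, HasDerivAt (fun τ : ℝ => X (t + a * τ)) (a • X' (t + a * τ)) τ := by
    intro a X X' hX τ
    have hca : HasDerivAt (fun τ : ℝ => t + a * τ) a τ := by
      simpa using ((hasDerivAt_id τ).const_mul a).const_add t
    exact HasDerivAt.scomp (𝕜 := ℝ) (𝕜' := ℝ) τ (hX (t + a * τ)) hca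
  have hcompt : ∀ (a : ℝ) (X : ℝ → Fin n → ℂ), DifferentiableAt ℝ X t →
      DifferentiableAt ℝ (fun τ : ℝ => X (t + a * τ)) 0 := by
    intro a X hX
    have hca : HasDerivAt (fun τ : ℝ => t + a * τ) a 0 := by
      simpa using ((hasDerivAt_id (0:ℝ)).const_mul a).const_add t
    have := HasDerivAt.scomp_of_eq (𝕜 := ℝ) (𝕜' := ℝ) 0 hX.hasDerivAt hca (by ring)
    simpa [Function.comp] using this.differentiableAt
  -- the transition polynomial and its derivatives
  set b : ℝ := s - 1 with hb
  set Tm : ℝ → Matrix (Fin n) (Fin n) ℂ :=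
    fun τ => 1 + τ • Q1 + τ ^ 2 • T2 + τ ^ 3 • T3 + τ ^ 4 • T4 with hTmeq
  set T1m : ℝ → Matrix (Fin n) (Fin n) ℂ :=
    fun τ => Q1 + (2 * τ) • T2 + (3 * τ ^ 2) • T3 + (4 * τ ^ 3) • T4 with hT1meq
  set T2m : ℝ → Matrix (Fin n) (Fin n) ℂ :=
    fun τ => (2 : ℝ) • T2 + (6 * τ) • T3 + (12 * τ ^ 2) • T4 with hT2meq
  set T3m : ℝ → Matrix (Fin n) (Fin n) ℂ :=
    fun τ => (6 : ℝ) • T3 + (24 * τ) • T4 with hT3meq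
  set T4m : ℝ → Matrix (Fin n) (Fin n) ℂ := fun _ => (24 : ℝ) • T4 with hT4meq
  have hTd : ∀ τ : ℝ, HasDerivAt Tm (T1m τ) τ := by
    intro τ
    rw [hTmeq, hT1meq]
    have h1 : HasDerivAt (fun τ : ℝ => τ • Q1) ((1:ℝ) • Q1) τ := (hasDerivAt_id τ).smul_const Q1
    have h2 : HasDerivAt (fun τ : ℝ => τ ^ 2 • T2) ((2 * τ) • T2) τ := by
      rw [show (2 * τ : ℝ) = (2:ℕ) * τ ^ (2-1) by push_cast; ring]
      exact (hasDerivAt_pow 2 τ).smul_const T2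
    have h3 : HasDerivAt (fun τ : ℝ => τ ^ 3 • T3) ((3 * τ ^ 2) • T3) τ := by
      rw [show (3 * τ ^ 2 : ℝ) = (3:ℕ) * τ ^ (3-1) by push_cast; ring]
      exact (hasDerivAt_pow 3 τ).smul_const T3
    have h4 : HasDerivAt (fun τ : ℝ => τ ^ 4 • T4) ((4 * τ ^ 3) • T4) τ := by
      rw [show (4 * τ ^ 3 : ℝ) = (4:ℕ) * τ ^ (4-1) by push_cast; ring]
      exact (hasDerivAt_pow 4 τ).smul_const T4
    have := (((hasDerivAt_const τ (1 : Matrix (Fin n) (Fin n) ℂ)).add h1).add h2).add h3 |>.add h4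
    simp only [zero_add, one_smul] at this
    exact this
  have hT1d : ∀ τ : ℝ, HasDerivAt T1m (T2m τ) τ := by
    intro τ
    rw [hT1meq, hT2meq]
    have h2 : HasDerivAt (fun τ : ℝ => (2 * τ) • T2) ((2:ℝ) • T2) τ := by
      have h0 := ((hasDerivAt_id τ).const_mul (2:ℝ)).smul_const T2
      simp only [id, mul_one] at h0
      exact h0
    have h3 : HasDerivAt (fun τ : ℝ => (3 * τ ^ 2) • T3) ((6 * τ) • T3) τ := by
      rw [show (6 * τ : ℝ) = 3 * ((2:ℕ) * τ ^ (2-1)) by push_cast; ring]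
      exact ((hasDerivAt_pow 2 τ).const_mul 3).smul_const T3
    have h4 : HasDerivAt (fun τ : ℝ => (4 * τ ^ 3) • T4) ((12 * τ ^ 2) • T4) τ := by
      rw [show (12 * τ ^ 2 : ℝ) = 4 * ((3:ℕ) * τ ^ (3-1)) by push_cast; ring]
      exact ((hasDerivAt_pow 3 τ).const_mul 4).smul_const T4
    have := (((hasDerivAt_const τ Q1).add h2).add h3).add h4
    simp only [zero_add, one_smul] at this
    exact this
  have hT2d : ∀ τ : ℝ, HasDerivAt T2m (T3m τ) τ := by
    intro τ
    rw [hT2meq, hT3meq]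
    have h3 : HasDerivAt (fun τ : ℝ => (6 * τ) • T3) ((6:ℝ) • T3) τ := by
      have h0 := ((hasDerivAt_id τ).const_mul (6:ℝ)).smul_const T3
      simp only [id, mul_one] at h0
      exact h0
    have h4 : HasDerivAt (fun τ : ℝ => (12 * τ ^ 2) • T4) ((24 * τ) • T4) τ := by
      rw [show (24 * τ : ℝ) = 12 * ((2:ℕ) * τ ^ (2-1)) by push_cast; ring]
      exact ((hasDerivAt_pow 2 τ).const_mul 12).smul_const T4
    have := ((hasDerivAt_const τ ((2:ℝ) • T2)).add h3).add h4
    simp only [zero_add, one_smul] at this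
    exact this
  have hT3d : ∀ τ : ℝ, HasDerivAt T3m (T4m τ) τ := by
    intro τ
    rw [hT3meq, hT4meq]
    have h4 : HasDerivAt (fun τ : ℝ => (24 * τ) • T4) ((24:ℝ) • T4) τ := by
      have h0 := ((hasDerivAt_id τ).const_mul (24:ℝ)).smul_const T4
      simp only [id, mul_one] at h0
      exact h0
    have := (hasDerivAt_const τ ((6:ℝ) • T3)).add h4
    simp only [zero_add, one_smul] at this
    exact this
  have hT4d : ∀ τ : ℝ, HasDerivAt T4m (0 : Matrix (Fin n) (Fin n) ℂ) τ := by
    intro τ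
    rw [hT4meq]
    exact hasDerivAt_const τ _
  -- the defect functions
  set y0 : ℝ → Fin n → ℂ :=
    fun τ => x (t + s * τ) - (Tm τ).mulVec (x (t + b * τ)) with hy0eq
  set y1 : ℝ → Fin n → ℂ :=
    fun τ => s • X1 (t + s * τ) -
      ((T1m τ).mulVec (x (t + b * τ)) + (Tm τ).mulVec (b • X1 (t + b * τ))) with hy1eq
  set y2 : ℝ → Fin n → ℂ :=
    fun τ => s • (s • X2 (t + s * τ)) -
      (((T2m τ).mulVec (x (t + b * τ)) + (T1m τ).mulVec (b • X1 (t + b * τ))) +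
       ((T1m τ).mulVec (b • X1 (t + b * τ)) +
        (Tm τ).mulVec (b • (b • X2 (t + b * τ))))) with hy2eq
  set y3 : ℝ → Fin n → ℂ :=
    fun τ => s • (s • (s • X3 (t + s * τ))) -
      ((((T3m τ).mulVec (x (t + b * τ)) + (T2m τ).mulVec (b • X1 (t + b * τ))) +
        ((T2m τ).mulVec (b • X1 (t + b * τ)) +
         (T1m τ).mulVec (b • (b • X2 (t + b * τ))))) +
       (((T2m τ).mulVec (b • X1 (t + b * τ)) +
         (T1m τ).mulVec (b • (b • X2 (t + b * τ)))) +
        ((T1m τ).mulVec (b • (b • X2 (t + b * τ))) +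
         (Tm τ).mulVec (b • (b • (b • X3 (t + b * τ))))))) with hy3eq
  set y4 : ℝ → Fin n → ℂ :=
    fun τ => s • (s • (s • (s • X4 (t + s * τ)))) -
      (((((T4m τ).mulVec (x (t + b * τ)) + (T3m τ).mulVec (b • X1 (t + b * τ))) +
         ((T3m τ).mulVec (b • X1 (t + b * τ)) +
          (T2m τ).mulVec (b • (b • X2 (t + b * τ))))) +
        (((T3m τ).mulVec (b • X1 (t + b * τ)) +
          (T2m τ).mulVec (b • (b • X2 (t + b * τ)))) +
         ((T2m τ).mulVec (b • (b • X2 (t + b * τ))) +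
          (T1m τ).mulVec (b • (b • (b • X3 (t + b * τ))))))) +
       ((((T3m τ).mulVec (b • X1 (t + b * τ)) +
          (T2m τ).mulVec (b • (b • X2 (t + b * τ)))) +
         ((T2m τ).mulVec (b • (b • X2 (t + b * τ))) +
          (T1m τ).mulVec (b • (b • (b • X3 (t + b * τ)))))) +
        (((T2m τ).mulVec (b • (b • X2 (t + b * τ))) +
          (T1m τ).mulVec (b • (b • (b • X3 (t + b * τ))))) +
         ((T1m τ).mulVec (b • (b • (b • X3 (t + b * τ)))) +
          (Tm τ).mulVec (b • (b • (b • (b • X4 (t + b * τ))))))))) with hy4eq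
  -- g-side derivatives
  have hg0d : ∀ τ : ℝ, HasDerivAt (fun τ => x (t + b * τ)) (b • X1 (t + b * τ)) τ :=
    hcomp b x X1 hx'
  have hg1d : ∀ τ : ℝ, HasDerivAt (fun τ => b • X1 (t + b * τ))
      (b • (b • X2 (t + b * τ))) τ := fun τ => (hcomp b X1 X2 hX1d τ).const_smul b
  have hg2d : ∀ τ : ℝ, HasDerivAt (fun τ => b • (b • X2 (t + b * τ)))
      (b • (b • (b • X3 (t + b * τ)))) τ := fun τ =>
    (((hcomp b X2 X3 hX2d τ).const_smul b).const_smul b)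
  have hg3d : ∀ τ : ℝ, HasDerivAt (fun τ => b • (b • (b • X3 (t + b * τ))))
      (b • (b • (b • (b • X4 (t + b * τ))))) τ := fun τ =>
    ((((hcomp b X3 X4 hX3d τ).const_smul b).const_smul b).const_smul b)
  -- f-side derivatives
  have hf0d : ∀ τ : ℝ, HasDerivAt (fun τ => x (t + s * τ)) (s • X1 (t + s * τ)) τ :=
    hcomp s x X1 hx'
  have hf1d : ∀ τ : ℝ, HasDerivAt (fun τ => s • X1 (t + s * τ))
      (s • (s • X2 (t + s * τ))) τ := fun τ => (hcomp s X1 X2 hX1d τ).const_smul s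
  have hf2d : ∀ τ : ℝ, HasDerivAt (fun τ => s • (s • X2 (t + s * τ)))
      (s • (s • (s • X3 (t + s * τ)))) τ := fun τ =>
    (((hcomp s X2 X3 hX2d τ).const_smul s).const_smul s)
  have hf3d : ∀ τ : ℝ, HasDerivAt (fun τ => s • (s • (s • X3 (t + s * τ))))
      (s • (s • (s • (s • X4 (t + s * τ))))) τ := fun τ =>
    ((((hcomp s X3 X4 hX3d τ).const_smul s).const_smul s).const_smul s)
  -- derivative chain for y
  have hy0d : ∀ τ : ℝ, HasDerivAt y0 (y1 τ) τ := by
    intro τ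
    rw [hy0eq, hy1eq]
    exact (hf0d τ).sub (hasDerivAt_matMulVec (hTd τ) (hg0d τ))
  have hy1d : ∀ τ : ℝ, HasDerivAt y1 (y2 τ) τ := by
    intro τ
    rw [hy1eq, hy2eq]
    exact (hf1d τ).sub ((hasDerivAt_matMulVec (hT1d τ) (hg0d τ)).add
      (hasDerivAt_matMulVec (hTd τ) (hg1d τ)))
  have hy2d : ∀ τ : ℝ, HasDerivAt y2 (y3 τ) τ := by
    intro τ
    rw [hy2eq, hy3eq]
    exact (hf2d τ).sub
      (((hasDerivAt_matMulVec (hT2d τ) (hg0d τ)).add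
          (hasDerivAt_matMulVec (hT1d τ) (hg1d τ))).add
        ((hasDerivAt_matMulVec (hT1d τ) (hg1d τ)).add
          (hasDerivAt_matMulVec (hTd τ) (hg2d τ))))
  have hy3d : ∀ τ : ℝ, HasDerivAt y3 (y4 τ) τ := by
    intro τ
    rw [hy3eq, hy4eq]
    exact (hf3d τ).sub
      ((((hasDerivAt_matMulVec (hT3d τ) (hg0d τ)).add
            (hasDerivAt_matMulVec (hT2d τ) (hg1d τ))).add
          ((hasDerivAt_matMulVec (hT2d τ) (hg1d τ)).add
            (hasDerivAt_matMulVec (hT1d τ) (hg2d τ)))).add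
        (((hasDerivAt_matMulVec (hT2d τ) (hg1d τ)).add
            (hasDerivAt_matMulVec (hT1d τ) (hg2d τ))).add
          ((hasDerivAt_matMulVec (hT1d τ) (hg2d τ)).add
            (hasDerivAt_matMulVec (hTd τ) (hg3d τ)))))
  -- y4 differentiable at 0
  have hmv : ∀ (f : ℝ → Matrix (Fin n) (Fin n) ℂ) (g : ℝ → Fin n → ℂ),
      DifferentiableAt ℝ f 0 → DifferentiableAt ℝ g 0 →
      DifferentiableAt ℝ (fun τ => (f τ).mulVec (g τ)) 0 := fun f g hf hg =>
    (hasDerivAt_matMulVec hf.hasDerivAt hg.hasDerivAt).differentiableAt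
  have dTm := (hTd 0).differentiableAt
  have dT1m := (hT1d 0).differentiableAt
  have dT2m := (hT2d 0).differentiableAt
  have dT3m := (hT3d 0).differentiableAt
  have dT4m := (hT4d 0).differentiableAt
  have dg0 := (hg0d 0).differentiableAt
  have dg1 := (hg1d 0).differentiableAt
  have dg2 := (hg2d 0).differentiableAt
  have dg3 := (hg3d 0).differentiableAt
  have dg4 : DifferentiableAt ℝ (fun τ => b • (b • (b • (b • X4 (t + b * τ))))) 0 :=
    ((((hcompt b X4 hX4diff).const_smul b).const_smul b).const_smul b).const_smul b
  have df4 : DifferentiableAt ℝ (fun τ => s • (s • (s • (s • X4 (t + s * τ))))) 0 :=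
    ((((hcompt s X4 hX4diff).const_smul s).const_smul s).const_smul s).const_smul s
  have hy4diff : DifferentiableAt ℝ y4 0 := by
    rw [hy4eq]
    refine DifferentiableAt.sub df4 ?_
    repeat' apply DifferentiableAt.add
    all_goals first
      | exact hmv _ _ dT4m dg0
      | exact hmv _ _ dT3m dg1
      | exact hmv _ _ dT2m dg2
      | exact hmv _ _ dT1m dg3
      | exact hmv _ _ dTm dg4
  -- evaluations at τ = 0
  have e1 : X1 t = Q1.mulVec (x t) := by simp only [hX1eq]; rw [hQ1]
  have e2m : A2 t = Q2 := by
    simp only [hA2eq, hD1eq]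
    rw [hQ2, hQ1, hQ1', iteratedDeriv_one, pow_two]
    rfl
  have e3m : A3 t = Q3 := by
    simp only [hA3eq, hD1eq, hD2eq]
    rw [hQ3, hQ1, hQ1', hQ1'', show iteratedDeriv 1 Q = deriv Q by rw [iteratedDeriv_one]; rfl,
      show iteratedDeriv 2 Q = deriv (deriv Q) by rw [iteratedDeriv_succ, iteratedDeriv_one]; rfl]
    noncomm_ring
  have e4m : A4 t = Q4 := by
    simp only [hA4eq, hD1eq, hD2eq, hD3eq]
    rw [hQ4, hQ1, hQ1', hQ1'', hQ1''', show iteratedDeriv 1 Q = deriv Q by rw [iteratedDeriv_one]; rfl,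
      show iteratedDeriv 2 Q = deriv (deriv Q) by rw [iteratedDeriv_succ, iteratedDeriv_one]; rfl,
      show iteratedDeriv 3 Q = deriv (deriv (deriv Q)) by
        rw [iteratedDeriv_succ, iteratedDeriv_succ, iteratedDeriv_one]; rfl]
    noncomm_ring
  have e2 : X2 t = Q2.mulVec (x t) := by simp only [hX2eq]; rw [e2m]
  have e3 : X3 t = Q3.mulVec (x t) := by simp only [hX3eq]; rw [e3m]
  have e4 : X4 t = Q4.mulVec (x t) := by simp only [hX4eq]; rw [e4m]
  have hz0 : y0 0 = 0 := by
    simp only [hy0eq, hTmeq]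
    norm_num [Matrix.one_mulVec]
  have hz1 : y1 0 = 0 := by
    simp only [hy1eq, hTmeq, hT1meq]
    norm_num [Matrix.one_mulVec, e1, Matrix.mulVec_smul]
    rw [hb]
    module
  have hz2 : y2 0 = 0 := by
    simp only [hy2eq, hTmeq, hT1meq, hT2meq]
    norm_num [Matrix.one_mulVec, e1, e2, Matrix.mulVec_smul, Matrix.mulVec_mulVec]
    rw [hb, hT2]
    simp only [Matrix.sub_mulVec, Matrix.add_mulVec, Matrix.smul_mulVec,
      Matrix.mulVec_smul, Matrix.mulVec_mulVec, sub_mul, add_mul, mul_add, smul_mul_assoc,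
      mul_smul_comm, mul_assoc, pow_succ, pow_zero, Matrix.one_mul, one_mul, smul_smul,
      smul_sub, smul_add]
    module
  have hz3 : y3 0 = 0 := by
    simp only [hy3eq, hTmeq, hT1meq, hT2meq, hT3meq]
    norm_num [Matrix.one_mulVec, e1, e2, e3, Matrix.mulVec_smul, Matrix.mulVec_mulVec]
    rw [hb, hT3, hT2]
    simp only [Matrix.sub_mulVec, Matrix.add_mulVec, Matrix.smul_mulVec,
      Matrix.mulVec_smul, Matrix.mulVec_mulVec, sub_mul, add_mul, mul_add, smul_mul_assoc,
      mul_smul_comm, mul_assoc, pow_succ, pow_zero, Matrix.one_mul, one_mul, smul_smul,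
      smul_sub, smul_add]
    module
  have hz4 : y4 0 = 0 := by
    simp only [hy4eq, hTmeq, hT1meq, hT2meq, hT3meq, hT4meq]
    norm_num [Matrix.one_mulVec, e1, e2, e3, e4, Matrix.mulVec_smul, Matrix.mulVec_mulVec]
    rw [hb, hT4]
    simp only [Matrix.sub_mulVec, Matrix.add_mulVec, Matrix.smul_mulVec,
      Matrix.mulVec_smul, Matrix.mulVec_mulVec, sub_mul, add_mul, mul_add, smul_mul_assoc,
      mul_smul_comm, mul_assoc, pow_succ, pow_zero, Matrix.one_mul, one_mul, smul_smul,
      smul_sub, smul_add]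
    module
  -- the asymptotic chain
  have hB4 : y4 =O[𝓝 (0:ℝ)] fun τ => τ ^ 1 := by
    have h := hy4diff.hasDerivAt.hasFDerivAt.isBigO_sub
    simp only [hz4, sub_zero] at h
    simpa [pow_one] using h
  have hB3 : y3 =O[𝓝 (0:ℝ)] fun τ => τ ^ 2 := by
    simpa using isBigO_succ_of_deriv hy3d hz3 hB4
  have hB2 : y2 =O[𝓝 (0:ℝ)] fun τ => τ ^ 3 := by
    simpa using isBigO_succ_of_deriv hy2d hz2 hB3
  have hB1 : y1 =O[𝓝 (0:ℝ)] fun τ => τ ^ 4 := by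
    simpa using isBigO_succ_of_deriv hy1d hz1 hB2
  have hB0 : y0 =O[𝓝 (0:ℝ)] fun τ => τ ^ 5 := by
    simpa using isBigO_succ_of_deriv hy0d hz0 hB1
  simpa only [hy0eq, hTmeq] using hB0
end

section
/- Let n ≥ 1, let Q : ℝ → Mₙ(ℂ) be four times continuously differentiable, fix t ∈ ℝ and s ∈ ℝ, and suppose A₁, A₂, A₃, A₄ ∈ Mₙ(ℂ) are such that for every differentiable x : ℝ → ℂⁿ with x'(u) = Q(u)·x(u) for all u, one has x(t + s·τ) − (I + τ·A₁ + τ²·A₂ + τ³·A₃ + τ⁴·A₄)·x(t + (s−1)·τ) = o(τ⁴) as τ → 0. Then necessarily A₁ = Q(t), A₂ = T₂, A₃ = T₃ and A₄ = T₄, where T₂, T₃, T₄ are the matrices defined in the context. -/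
open Matrix Filter Asymptotics
open scoped Topology

attribute [local instance] Matrix.normedAddCommGroup Matrix.normedSpace

/-! ### Auxiliary machinery -/

section TaylorTools

variable {E : Type*} [NormedAddCommGroup E] [NormedSpace ℝ E]

/-- One step of the Taylor estimate: integrating a little-o bound on the derivative. -/
lemma fon_taylor_step {g g' p p' : ℝ → E} {a : ℝ} {k : ℕ}
    (hg : ∀ u, HasDerivAt g (g' u) u) (hp : ∀ h, HasDerivAt p (p' h) h)
    (hp0 : p 0 = g a)
    (hlo : (fun h => g' (a + h) - p' h) =o[𝓝 (0:ℝ)] fun h => h ^ k) :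
    (fun h => g (a + h) - p h) =o[𝓝 (0:ℝ)] fun h => h ^ (k + 1) := by
  set r : ℝ → E := fun h => g (a + h) - p h with hr
  set d : ℝ → E := fun h => g' (a + h) - p' h with hd
  have hrd : ∀ h, HasDerivAt r (d h) h := by
    intro h
    have h1 : HasDerivAt (fun h : ℝ => g (a + h)) (g' (a + h)) h := by
      exact (hg (a + h)).comp_const_add a h
    exact h1.sub (hp h)
  have hr0 : r 0 = 0 := by simp [hr, hp0]
  rw [isLittleO_iff]
  intro c hc
  have := (isLittleO_iff.mp hlo) hc
  rw [Metric.eventually_nhds_iff] at this ⊢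
  obtain ⟨δ, hδ, hb⟩ := this
  refine ⟨δ, hδ, fun {h} hh => ?_⟩
  simp only [Real.dist_eq, sub_zero] at hh ⊢
  have key : ∀ x : ℝ, |x| ≤ |h| → ‖d x‖ ≤ c * |h| ^ k := by
    intro x hx
    have : ‖d x‖ ≤ c * ‖x ^ k‖ := by
      apply hb; simp [Real.dist_eq]; exact lt_of_le_of_lt hx hh
    refine this.trans ?_
    have : ‖x ^ k‖ ≤ |h| ^ k := by
      rw [norm_pow, Real.norm_eq_abs]
      exact pow_le_pow_left₀ (abs_nonneg x) hx k
    nlinarith [this, le_of_lt hc]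
  rcases le_or_gt 0 h with hpos | hneg
  · have := norm_image_sub_le_of_norm_deriv_le_segment'
      (f := r) (f' := d) (a := 0) (b := h) (C := c * |h| ^ k)
      (fun x hx => (hrd x).hasDerivWithinAt)
      (fun x hx => key x (by rw [abs_of_nonneg hx.1, abs_of_nonneg hpos]; exact le_of_lt hx.2))
      h (Set.right_mem_Icc.2 hpos)
    rw [hr0, sub_zero] at this
    calc ‖r h‖ ≤ c * |h| ^ k * (h - 0) := this
      _ ≤ c * ‖h ^ (k+1)‖ := by
          rw [norm_pow, Real.norm_eq_abs, sub_zero, pow_succ]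
          have h1 : c * |h| ^ k * h ≤ c * |h| ^ k * |h| :=
            mul_le_mul_of_nonneg_left (le_abs_self h) (by positivity)
          linarith [h1]
  · have := norm_image_sub_le_of_norm_deriv_le_segment'
      (f := r) (f' := d) (a := h) (b := 0) (C := c * |h| ^ k)
      (fun x hx => (hrd x).hasDerivWithinAt)
      (fun x hx => key x (by
        rw [abs_of_neg hneg, abs_of_nonpos (le_of_lt hx.2)]
        linarith [hx.1]))
      0 (Set.right_mem_Icc.2 (le_of_lt hneg))
    rw [hr0, zero_sub, norm_neg] at this
    calc ‖r h‖ ≤ c * |h| ^ k * (0 - h) := this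
      _ ≤ c * ‖h ^ (k+1)‖ := by
          rw [norm_pow, Real.norm_eq_abs, pow_succ]
          have h1 : c * |h| ^ k * (0 - h) ≤ c * |h| ^ k * |h| := by
            apply mul_le_mul_of_nonneg_left _ (by positivity)
            rw [zero_sub]; exact neg_le_abs h
          linarith [h1]

/-- Extracting the constant coefficient from a little-o bound. -/
lemma fon_coeff_last {c : E} {g : ℝ → E} {m : ℕ} (hg : ContinuousAt g 0)
    (h : (fun τ => c + τ • g τ) =o[𝓝[≠] (0:ℝ)] fun τ => τ ^ m) : c = 0 := by
  have h1 : (fun τ : ℝ => c + τ • g τ) =o[𝓝[≠] (0:ℝ)] (fun _ => (1:ℝ)) := by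
    refine h.trans_isBigO (isBigO_iff.2 ⟨1, ?_⟩)
    filter_upwards [self_mem_nhdsWithin,
      eventually_nhdsWithin_of_eventually_nhds (Metric.eventually_nhds_iff.2
        ⟨1, one_pos, fun {y} hy => (le_of_lt (by simpa [Real.dist_eq] using hy) : |y| ≤ 1)⟩)]
        with τ _ hτ
    simp only [norm_pow, Real.norm_eq_abs, norm_one, one_mul]
    exact pow_le_one₀ (abs_nonneg τ) hτ
  have h2 : Tendsto (fun τ : ℝ => c + τ • g τ) (𝓝[≠] (0:ℝ)) (𝓝 0) :=
    isLittleO_one_iff ℝ |>.1 h1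
  have h3 : Tendsto (fun τ : ℝ => c + τ • g τ) (𝓝[≠] (0:ℝ)) (𝓝 c) := by
    have : ContinuousAt (fun τ : ℝ => c + τ • g τ) 0 :=
      (continuousAt_const.add (continuousAt_id.smul hg))
    simpa using this.continuousWithinAt.tendsto
  exact tendsto_nhds_unique h3 h2

/-- Peeling off one coefficient of a vector-valued polynomial which is little-o. -/
lemma fon_coeff_step {c : E} {g : ℝ → E} {m : ℕ} (hg : ContinuousAt g 0)
    (h : (fun τ => c + τ • g τ) =o[𝓝[≠] (0:ℝ)] fun τ => τ ^ (m + 1)) :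
    c = 0 ∧ (g =o[𝓝[≠] (0:ℝ)] fun τ => τ ^ m) := by
  have hc : c = 0 := fon_coeff_last hg h
  subst hc
  refine ⟨rfl, ?_⟩
  rw [isLittleO_iff] at h ⊢
  intro ε hε
  filter_upwards [h hε, self_mem_nhdsWithin] with τ hτ hτ0
  simp only [zero_add, norm_smul, Real.norm_eq_abs, norm_pow, abs_pow] at hτ ⊢
  have habs : |τ| > 0 := abs_pos.2 hτ0
  rw [pow_succ] at hτ
  calc ‖g τ‖ = (|τ| * ‖g τ‖) / |τ| := by field_simp
    _ ≤ (ε * (|τ| ^ m * |τ|)) / |τ| := by gcongr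
    _ = ε * |τ| ^ m := by field_simp

/-- Derivative of an affine reparametrisation. -/
lemma fon_comp_chain {f f' : ℝ → E} (hf : ∀ u, HasDerivAt f (f' u) u) (t c τ : ℝ) :
    HasDerivAt (fun τ : ℝ => f (t + c * τ)) (c • f' (t + c * τ)) τ := by
  have h1 : HasDerivAt (fun τ : ℝ => t + c * τ) c τ := by
    simpa using ((hasDerivAt_id τ).const_mul c).const_add t
  exact (hf (t + c * τ)).scomp τ h1

lemma fon_hasDerivAt_linear (w : E) (h : ℝ) :
    HasDerivAt (fun h : ℝ => h • w) w h := by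
  simpa using (hasDerivAt_id h).smul_const w

lemma fon_hasDerivAt_quad (w : E) (h : ℝ) :
    HasDerivAt (fun h : ℝ => (h ^ 2 / 2) • w) (h • w) h := by
  have := ((hasDerivAt_pow 2 h).div_const 2).smul_const w
  convert this using 1
  congr 1
  push_cast
  ring

lemma fon_hasDerivAt_cub (w : E) (h : ℝ) :
    HasDerivAt (fun h : ℝ => (h ^ 3 / 6) • w) ((h ^ 2 / 2) • w) h := by
  have := ((hasDerivAt_pow 3 h).div_const 6).smul_const w
  convert this using 1
  congr 1
  push_cast
  ring

lemma fon_hasDerivAt_quart (w : E) (h : ℝ) :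
    HasDerivAt (fun h : ℝ => (h ^ 4 / 24) • w) ((h ^ 3 / 6) • w) h := by
  have := ((hasDerivAt_pow 4 h).div_const 24).smul_const w
  convert this using 1
  congr 1
  push_cast
  ring

end TaylorTools
section MatrixTools

/-- `mulVec` as a continuous linear map on matrices (real scalars). -/
noncomputable def fonPhi (n : ℕ) :
    Matrix (Fin n) (Fin n) ℂ →L[ℝ] ((Fin n → ℂ) →L[ℝ] (Fin n → ℂ)) :=
  LinearMap.toContinuousLinearMap <|
    { toFun := fun M => (LinearMap.toContinuousLinearMap (M.mulVecLin.restrictScalars ℝ))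
      map_add' := by intro M N; ext v; simp [Matrix.add_mulVec]
      map_smul' := by intro c M; ext v; simp [Matrix.smul_mulVec] }

@[simp] lemma fonPhi_apply {n : ℕ} (M : Matrix (Fin n) (Fin n) ℂ) (v : Fin n → ℂ) :
    fonPhi n M v = M.mulVec v := rfl

lemma fon_hasDerivAt_mulVec {n : ℕ} {M : ℝ → Matrix (Fin n) (Fin n) ℂ} {y : ℝ → Fin n → ℂ}
    {M' : Matrix (Fin n) (Fin n) ℂ} {y' : Fin n → ℂ} {u : ℝ}
    (hM : HasDerivAt M M' u) (hy : HasDerivAt y y' u) :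
    HasDerivAt (fun u => (M u).mulVec (y u)) (M'.mulVec (y u) + (M u).mulVec y') u := by
  have h1 : HasDerivAt (fun u => fonPhi n (M u)) (fonPhi n M') u :=
    ((fonPhi n).hasFDerivAt.comp_hasDerivAt u hM)
  simpa using h1.clm_apply hy

lemma fon_cont_mulVec {n : ℕ} {M : ℝ → Matrix (Fin n) (Fin n) ℂ} {y : ℝ → Fin n → ℂ}
    (hM : Continuous M) (hy : Continuous y) :
    Continuous fun u => (M u).mulVec (y u) :=
  ((fonPhi n).continuous.comp hM).clm_apply hy

lemma fon_mulVec_ext {n : ℕ} {M N : Matrix (Fin n) (Fin n) ℂ}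
    (h : ∀ v, M.mulVec v = N.mulVec v) : M = N := by
  ext i j
  have := congrFun (h (Pi.single j 1)) i
  simpa using this

end MatrixTools

section Picard

open MeasureTheory intervalIntegral

variable {E : Type*} [NormedAddCommGroup E] [NormedSpace ℝ E] [CompleteSpace E]
variable {A : ℝ → E →L[ℝ] E} {t : ℝ} {v : E}

/-- Picard iterates for the linear ODE `x' = A t x`. -/
noncomputable def fonPic (A : ℝ → E →L[ℝ] E) (t : ℝ) (v : E) : ℕ → ℝ → E
  | 0 => fun _ => v
  | (k+1) => fun u => ∫ r in t..u, A r (fonPic A t v k r)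

lemma fonPic_cont (hA : Continuous A) : ∀ k, Continuous (fonPic A t v k) := by
  intro k
  induction k with
  | zero => exact continuous_const
  | succ k ih =>
      have hg : Continuous fun r => A r (fonPic A t v k r) := hA.clm_apply ih
      rw [continuous_iff_continuousAt]
      intro u
      exact ((hg.integral_hasStrictDerivAt t u).hasDerivAt).continuousAt

lemma fonPic_bound {M R : ℝ} (hM0 : 0 ≤ M) (hA : Continuous A)
    (hM : ∀ r ∈ Set.Icc (t - R) (t + R), ‖A r‖ ≤ M) :
    ∀ k, ∀ r ∈ Set.Icc (t - R) (t + R),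
      ‖fonPic A t v k r‖ ≤ ‖v‖ * (M * |r - t|) ^ k / k.factorial := by
  intro k
  induction k with
  | zero => intro r _; simp [fonPic]
  | succ k ih =>
      intro r hr
      have ht : t ∈ Set.Icc (t - R) (t + R) := by
        constructor <;> nlinarith [hr.1, hr.2]
      have hsub : Set.uIoc t r ⊆ Set.Icc (t - R) (t + R) := by
        intro ρ hρ
        rw [Set.mem_uIoc] at hρ
        rcases hρ with ⟨h1, h2⟩ | ⟨h1, h2⟩ <;>
          exact ⟨by linarith [ht.1, hr.1], by linarith [ht.2, hr.2]⟩
      have hcont : Continuous fun ρ => A ρ (fonPic A t v k ρ) := hA.clm_apply (fonPic_cont hA k)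
      have step1 : ‖fonPic A t v (k+1) r‖ ≤ ∫ ρ in Set.uIoc t r, ‖A ρ (fonPic A t v k ρ)‖ :=
        norm_integral_le_integral_norm_uIoc
      set c : ℝ := ‖v‖ * M ^ (k+1) / k.factorial with hc
      have hc0 : 0 ≤ c := by positivity
      have step2 : ∫ ρ in Set.uIoc t r, ‖A ρ (fonPic A t v k ρ)‖
          ≤ ∫ ρ in Set.uIoc t r, c * |ρ - t| ^ k := by
        apply setIntegral_mono_on
        · exact (hcont.norm).integrableOn_uIoc
        · exact (continuous_const.mul
            ((continuous_id.sub continuous_const).abs.pow k)).integrableOn_uIoc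
        · exact measurableSet_uIoc
        · intro ρ hρ
          have h1 : ‖A ρ (fonPic A t v k ρ)‖ ≤ ‖A ρ‖ * ‖fonPic A t v k ρ‖ :=
            (A ρ).le_opNorm _
          have h2 : ‖A ρ‖ ≤ M := hM ρ (hsub hρ)
          have h3 : ‖fonPic A t v k ρ‖ ≤ ‖v‖ * (M * |ρ - t|) ^ k / k.factorial :=
            ih ρ (hsub hρ)
          calc ‖A ρ (fonPic A t v k ρ)‖ ≤ ‖A ρ‖ * ‖fonPic A t v k ρ‖ := h1
            _ ≤ M * (‖v‖ * (M * |ρ - t|) ^ k / k.factorial) := by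
                apply mul_le_mul h2 h3 (norm_nonneg _) hM0
            _ = c * |ρ - t| ^ k := by
                rw [hc, mul_pow]; field_simp; ring
      have step3 : ∫ ρ in Set.uIoc t r, c * |ρ - t| ^ k
          = c * (|r - t| ^ (k+1) / (k+1)) := by
        rw [MeasureTheory.integral_const_mul, integral_pow_abs_sub_uIoc]
      calc ‖fonPic A t v (k+1) r‖ ≤ ∫ ρ in Set.uIoc t r, ‖A ρ (fonPic A t v k ρ)‖ := step1
        _ ≤ ∫ ρ in Set.uIoc t r, c * |ρ - t| ^ k := step2
        _ = c * (|r - t| ^ (k+1) / (k+1)) := step3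
        _ = ‖v‖ * (M * |r - t|) ^ (k+1) / (k+1).factorial := by
            rw [hc, mul_pow, Nat.factorial_succ]
            push_cast
            field_simp

omit [CompleteSpace E] in
lemma fon_exists_M (hA : Continuous A) (t R : ℝ) :
    ∃ M : ℝ, 0 ≤ M ∧ ∀ r ∈ Set.Icc (t - R) (t + R), ‖A r‖ ≤ M := by
  obtain ⟨C, hC⟩ := (isCompact_Icc (a := t - R) (b := t + R)).exists_bound_of_continuousOn
    (hA.norm.continuousOn)
  refine ⟨max C 0, le_max_right _ _, fun r hr => ?_⟩
  have := hC r hr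
  rw [norm_norm] at this
  exact this.trans (le_max_left _ _)

lemma fonPic_summable (hA : Continuous A) (u : ℝ) :
    Summable fun k => fonPic A t v k u := by
  obtain ⟨M, hM0, hM⟩ := fon_exists_M hA t |u - t|
  have hu : u ∈ Set.Icc (t - |u - t|) (t + |u - t|) := by
    constructor <;> [linarith [neg_abs_le (u - t)]; linarith [le_abs_self (u - t)]]
  apply Summable.of_norm_bounded
    ((Real.summable_pow_div_factorial (M * |u - t|)).mul_left ‖v‖)
  intro k
  have := fonPic_bound (v := v) hM0 hA hM k u hu
  calc ‖fonPic A t v k u‖ ≤ ‖v‖ * (M * |u - t|) ^ k / k.factorial := this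
    _ = ‖v‖ * ((M * |u - t|) ^ k / k.factorial) := by ring

/-- Global solution of the linear ODE, as a series of Picard iterates. -/
noncomputable def fonSol (A : ℝ → E →L[ℝ] E) (t : ℝ) (v : E) : ℝ → E :=
  fun u => ∑' k, fonPic A t v k u

lemma fonSol_continuous (hA : Continuous A) : Continuous (fonSol A t v) := by
  rw [continuous_iff_continuousAt]
  intro w
  set R := |w - t| + 1 with hR
  obtain ⟨M, hM0, hM⟩ := fon_exists_M hA t R
  have hsum : Summable fun k => ‖v‖ * ((M * R) ^ k / k.factorial) :=
    (Real.summable_pow_div_factorial (M * R)).mul_left ‖v‖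
  have hR0 : 0 ≤ R := by positivity
  have hUC := tendstoUniformlyOn_tsum hsum
    (f := fun k x => fonPic A t v k x) (s := Set.Icc (t - R) (t + R)) ?bound
  case bound =>
    intro k x hx
    have h1 := fonPic_bound (v := v) hM0 hA hM k x hx
    have h2 : |x - t| ≤ R := by
      rw [abs_le]; constructor <;> [linarith [hx.1]; linarith [hx.2]]
    calc ‖fonPic A t v k x‖ ≤ ‖v‖ * (M * |x - t|) ^ k / k.factorial := h1
      _ ≤ ‖v‖ * ((M * R) ^ k / k.factorial) := by
          rw [mul_div_assoc]
          have hp : (M * |x - t|) ^ k ≤ (M * R) ^ k :=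
            pow_le_pow_left₀ (by positivity) (by nlinarith) k
          have hd : (M * |x - t|) ^ k / k.factorial ≤ (M * R) ^ k / k.factorial := by
            gcongr
          exact mul_le_mul_of_nonneg_left hd (norm_nonneg v)
  have hco : ContinuousOn (fonSol A t v) (Set.Icc (t - R) (t + R)) := by
    apply hUC.continuousOn
    apply Filter.Eventually.frequently
    filter_upwards with K
    exact (continuous_finset_sum _ fun k _ => fonPic_cont hA k).continuousOn
  apply hco.continuousAt
  apply Icc_mem_nhds
  · have := neg_abs_le (w - t); linarith
  · have := le_abs_self (w - t); linarith

lemma fonSol_eq (hA : Continuous A) (u : ℝ) :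
    fonSol A t v u = v + ∫ r in t..u, A r (fonSol A t v r) := by
  set R := |u - t| with hR
  obtain ⟨M, hM0, hM⟩ := fon_exists_M hA t R
  have hmem : ∀ x ∈ Set.uIcc t u, x ∈ Set.Icc (t - R) (t + R) := by
    intro x hx
    have ht : t ∈ Set.Icc (t - R) (t + R) := by
      constructor <;> [linarith [abs_nonneg (u - t)]; linarith [abs_nonneg (u - t)]]
    have hu : u ∈ Set.Icc (t - R) (t + R) := by
      constructor <;> [linarith [neg_abs_le (u - t)]; linarith [le_abs_self (u - t)]]
    rw [Set.mem_uIcc] at hx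
    rcases hx with ⟨h1, h2⟩ | ⟨h1, h2⟩ <;>
      exact ⟨by linarith [ht.1, hu.1], by linarith [ht.2, hu.2]⟩
  have hcont : ∀ k, Continuous fun r => A r (fonPic A t v k r) :=
    fun k => hA.clm_apply (fonPic_cont hA k)
  set cf : ℕ → C(ℝ, E) := fun k => ⟨fun r => A r (fonPic A t v k r), hcont k⟩ with hcf
  have hsummable : Summable fun k : ℕ =>
      ‖(cf k).restrict (⟨Set.uIcc t u, isCompact_uIcc⟩ : TopologicalSpace.Compacts ℝ)‖ := by
    apply Summable.of_nonneg_of_le (fun k => norm_nonneg _)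
      (f := fun k => M * (‖v‖ * ((M * R) ^ k / k.factorial)))
    · intro k
      rw [ContinuousMap.norm_le _ (by positivity)]
      rintro ⟨x, hx⟩
      have h1 := fonPic_bound (v := v) hM0 hA hM k x (hmem x hx)
      have h2 : |x - t| ≤ R := by
        have := hmem x hx
        rw [abs_le]; constructor <;> [linarith [this.1]; linarith [this.2]]
      calc ‖A x (fonPic A t v k x)‖ ≤ ‖A x‖ * ‖fonPic A t v k x‖ := (A x).le_opNorm _
        _ ≤ M * (‖v‖ * ((M * R) ^ k / k.factorial)) := by
            apply mul_le_mul (hM x (hmem x hx)) _ (norm_nonneg _) hM0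
            calc ‖fonPic A t v k x‖ ≤ ‖v‖ * (M * |x - t|) ^ k / k.factorial := h1
              _ ≤ ‖v‖ * ((M * R) ^ k / k.factorial) := by
                  rw [mul_div_assoc]
                  have hp : (M * |x - t|) ^ k ≤ (M * R) ^ k :=
                    pow_le_pow_left₀ (by positivity) (by nlinarith) k
                  have hd : (M * |x - t|) ^ k / k.factorial
                      ≤ (M * R) ^ k / k.factorial := by gcongr
                  exact mul_le_mul_of_nonneg_left hd (norm_nonneg v)
    · exact ((Real.summable_pow_div_factorial (M * R)).mul_left ‖v‖).mul_left M
  have hHS := hasSum_intervalIntegral_of_summable_norm (a := t) (b := u) hsummable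
  have hint_eq : (∫ x in t..u, ∑' k, (cf k) x) = ∫ r in t..u, A r (fonSol A t v r) := by
    apply intervalIntegral.integral_congr
    intro x _
    show ∑' k, A x (fonPic A t v k x) = A x (fonSol A t v x)
    exact ((A x).map_tsum (fonPic_summable hA x)).symm
  rw [hint_eq] at hHS
  have hterm : ∀ k, (∫ x in t..u, (cf k) x) = fonPic A t v (k+1) u := fun k => rfl
  simp only [hterm] at hHS
  have hsum2 : Summable fun k => fonPic A t v k u := fonPic_summable hA u
  have : fonSol A t v u = fonPic A t v 0 u + ∑' k, fonPic A t v (k+1) u :=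
    Summable.tsum_eq_zero_add hsum2
  rw [this, hHS.tsum_eq]
  rfl

theorem fon_exists_global_solution (hA : Continuous A) (t : ℝ) (v : E) :
    ∃ x : ℝ → E, x t = v ∧ ∀ u, HasDerivAt x (A u (x u)) u := by
  refine ⟨fonSol A t v, ?_, ?_⟩
  · have := fonSol_eq (t := t) (v := v) hA t
    simpa using this
  · intro u
    have hg : Continuous fun r => A r (fonSol A t v r) :=
      hA.clm_apply (fonSol_continuous hA)
    have H : HasDerivAt (fun w => v + ∫ r in t..w, A r (fonSol A t v r))
        (A u (fonSol A t v u)) u :=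
      ((hg.integral_hasStrictDerivAt t u).hasDerivAt).const_add v
    exact H.congr_of_eventuallyEq (Filter.Eventually.of_forall fun w => fonSol_eq hA w)

end Picard
section Taylor4

variable {E : Type*} [NormedAddCommGroup E] [NormedSpace ℝ E]

/-- Fourth order Taylor expansion with Peano remainder, for a chain of derivatives. -/
lemma fon_taylor4 {f0 f1 f2 f3 f4 : ℝ → E}
    (h0 : ∀ u, HasDerivAt f0 (f1 u) u) (h1 : ∀ u, HasDerivAt f1 (f2 u) u)
    (h2 : ∀ u, HasDerivAt f2 (f3 u) u) (h3 : ∀ u, HasDerivAt f3 (f4 u) u)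
    (h4 : Continuous f4) (a : ℝ) :
    (fun h => f0 (a + h) -
      (f0 a + h • f1 a + (h ^ 2 / 2) • f2 a + (h ^ 3 / 6) • f3 a + (h ^ 4 / 24) • f4 a))
      =o[𝓝 (0:ℝ)] fun h => h ^ 4 := by
  have c4 : (fun h => f4 (a + h) - (fun _ : ℝ => f4 a) h) =o[𝓝 (0:ℝ)] fun h => h ^ 0 := by
    have ht : Filter.Tendsto (fun h : ℝ => f4 (a + h) - f4 a) (𝓝 0) (𝓝 0) := by
      have h1' : Filter.Tendsto (fun h : ℝ => f4 (a + h)) (𝓝 0) (𝓝 (f4 a)) := by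
        have := ((h4.comp ((continuous_const (y := a)).add continuous_id)).tendsto 0)
        simpa [Function.comp_def, Pi.add_def] using this
      simpa using h1'.sub (tendsto_const_nhds (x := f4 a))
    have h2' := (Asymptotics.isLittleO_one_iff ℝ).2 ht
    have hfe : (fun h : ℝ => h ^ 0) = fun _ : ℝ => (1:ℝ) := by funext h; simp
    rw [hfe]
    exact h2'
  have c3 := fon_taylor_step (k := 0) h3
    (p := fun h => f3 a + h • f4 a) (p' := fun _ => f4 a)
    (fun h => by exact ((hasDerivAt_const h (f3 a)).add (fon_hasDerivAt_linear (f4 a) h)).congr_deriv (by simp))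
    (by simp) c4
  have c2 := fon_taylor_step (k := 1) h2
    (p := fun h => f2 a + h • f3 a + (h ^ 2 / 2) • f4 a)
    (p' := fun h => f3 a + h • f4 a)
    (fun h => by
      exact (((hasDerivAt_const h (f2 a)).add (fon_hasDerivAt_linear (f3 a) h)).add
        (fon_hasDerivAt_quad (f4 a) h)).congr_deriv (by simp))
    (by simp) c3
  have c1 := fon_taylor_step (k := 2) h1
    (p := fun h => f1 a + h • f2 a + (h ^ 2 / 2) • f3 a + (h ^ 3 / 6) • f4 a)
    (p' := fun h => f2 a + h • f3 a + (h ^ 2 / 2) • f4 a)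
    (fun h => by
      exact ((((hasDerivAt_const h (f1 a)).add (fon_hasDerivAt_linear (f2 a) h)).add
        (fon_hasDerivAt_quad (f3 a) h)).add (fon_hasDerivAt_cub (f4 a) h)).congr_deriv (by simp))
    (by simp) c2
  have c0 := fon_taylor_step (k := 3) h0
    (p := fun h => f0 a + h • f1 a + (h ^ 2 / 2) • f2 a + (h ^ 3 / 6) • f3 a + (h ^ 4 / 24) • f4 a)
    (p' := fun h => f1 a + h • f2 a + (h ^ 2 / 2) • f3 a + (h ^ 3 / 6) • f4 a)
    (fun h => by
      exact (((((hasDerivAt_const h (f0 a)).add (fon_hasDerivAt_linear (f1 a) h)).add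
        (fon_hasDerivAt_quad (f2 a) h)).add (fon_hasDerivAt_cub (f3 a) h)).add
        (fon_hasDerivAt_quart (f4 a) h)).congr_deriv (by simp))
    (by simp) c1
  exact c0

end Taylor4
/-- necessity — a fourth-order one-step scheme must have the expansion
`T = I + τ·Q(t) + τ²·T₂ + τ³·T₃ + τ⁴·T₄`. -/
theorem fourth_order_necessity
    {n : ℕ} (hn : 1 ≤ n)
    (Q : ℝ → Matrix (Fin n) (Fin n) ℂ) (hQ : ContDiff ℝ 4 Q)
    (t s : ℝ)
    (A₁ A₂ A₃ A₄ : Matrix (Fin n) (Fin n) ℂ)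
    (Q1 Q1' Q1'' Q1''' Q2 Q3 Q4 T2 T3 T4 : Matrix (Fin n) (Fin n) ℂ)
    (hQ1 : Q1 = Q t)
    (hQ1' : Q1' = iteratedDeriv 1 Q t)
    (hQ1'' : Q1'' = iteratedDeriv 2 Q t)
    (hQ1''' : Q1''' = iteratedDeriv 3 Q t)
    (hQ2 : Q2 = Q1' + Q1 ^ 2)
    (hQ3 : Q3 = Q1'' + 2 • (Q1' * Q1) + Q1 * Q1' + Q1 ^ 3)
    (hQ4 : Q4 = Q1''' + 3 • (Q1'' * Q1) + Q1 * Q1'' + 3 • (Q1' ^ 2)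
      + 3 • (Q1' * Q1 ^ 2) + 2 • (Q1 * Q1' * Q1) + Q1 ^ 2 * Q1' + Q1 ^ 4)
    (hT2 : T2 = ((2 * s - 1) / 2 : ℝ) • Q2 - (s - 1 : ℝ) • Q1 ^ 2)
    (hT3 : T3 = ((3 * s ^ 2 - 3 * s + 1) / 6 : ℝ) • Q3
      - ((s - 1) ^ 2 / 2 : ℝ) • (Q1 * Q2)
      - ((2 * s - 1) * (s - 1) / 2 : ℝ) • (Q2 * Q1)
      + ((s - 1) ^ 2 : ℝ) • Q1 ^ 3)
    (hT4 : T4 = ((2 * s - 1) * (2 * s ^ 2 - 2 * s + 1) / 24 : ℝ) • Q4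
      - ((s - 1) ^ 3 / 6 : ℝ) • (Q1 * Q3)
      - ((s - 1) ^ 2 / 2 : ℝ) • (T2 * Q2)
      - (s - 1 : ℝ) • (T3 * Q1))
    (h : ∀ x : ℝ → Fin n → ℂ, (∀ u : ℝ, HasDerivAt x ((Q u).mulVec (x u)) u) →
      (fun τ : ℝ =>
          x (t + s * τ) -
            (1 + τ • A₁ + τ ^ 2 • A₂ + τ ^ 3 • A₃ + τ ^ 4 • A₄).mulVec
              (x (t + (s - 1) * τ)))
        =o[𝓝 0] fun τ => τ ^ 4) :
    A₁ = Q1 ∧ A₂ = T2 ∧ A₃ = T3 ∧ A₄ = T4 := by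
  classical
  -- smoothness bookkeeping for `Q`
  have hQ4n : ContDiff ℝ ((4:ℕ) : WithTop ℕ∞) Q := by exact_mod_cast hQ
  have hC1 : ContDiff ℝ ((3:ℕ) : WithTop ℕ∞) (deriv Q) := by
    have := ContDiff.iterate_deriv' 3 1 hQ4n
    exact this
  have hC2 : ContDiff ℝ ((2:ℕ) : WithTop ℕ∞) (deriv (deriv Q)) := by
    have := ContDiff.iterate_deriv' 2 1 hC1
    exact this
  have hC3 : ContDiff ℝ ((1:ℕ) : WithTop ℕ∞) (deriv (deriv (deriv Q))) := by
    have := ContDiff.iterate_deriv' 1 1 hC2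
    exact this
  have hd0 : ∀ u, HasDerivAt Q (deriv Q u) u := fun u =>
    ((hQ4n.differentiable (by norm_num)).differentiableAt).hasDerivAt
  have hd1 : ∀ u, HasDerivAt (deriv Q) (deriv (deriv Q) u) u := fun u =>
    ((hC1.differentiable (by norm_num)).differentiableAt).hasDerivAt
  have hd2 : ∀ u, HasDerivAt (deriv (deriv Q)) (deriv (deriv (deriv Q)) u) u := fun u =>
    ((hC2.differentiable (by norm_num)).differentiableAt).hasDerivAt
  have hcQ : Continuous Q := hQ.continuous
  have hc1 : Continuous (deriv Q) := hC1.continuous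
  have hc2 : Continuous (deriv (deriv Q)) := hC2.continuous
  have hc3 : Continuous (deriv (deriv (deriv Q))) := hC3.continuous
  have hD1t : deriv Q t = Q1' := by rw [hQ1', iteratedDeriv_one]; rfl
  have hD2t : deriv (deriv Q) t = Q1'' := by
    rw [hQ1'', show (2:ℕ) = 1 + 1 from rfl, iteratedDeriv_succ, iteratedDeriv_one]; rfl
  have hD3t : deriv (deriv (deriv Q)) t = Q1''' := by
    rw [hQ1''', show (3:ℕ) = 2 + 1 from rfl, iteratedDeriv_succ,
      show (2:ℕ) = 1 + 1 from rfl, iteratedDeriv_succ, iteratedDeriv_one]; rfl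
  have hA : Continuous fun u => fonPhi n (Q u) := (fonPhi n).continuous.comp hcQ
  -- power rewrites
  have hp2 : Q1 ^ 2 = Q1 * Q1 := pow_two Q1
  have hp3 : Q1 ^ 3 = Q1 * Q1 * Q1 := by rw [pow_succ, pow_two]
  have hp4 : Q1 ^ 4 = Q1 * Q1 * Q1 * Q1 := by rw [pow_succ, hp3]
  have hQ3' : Q3 = Q1'' + (Q1' * Q1 + Q1' * Q1) + Q1 * Q1' + Q1 ^ 3 := by rw [hQ3]; abel
  have hQ4' : Q4 = Q1''' + (Q1'' * Q1 + Q1'' * Q1 + Q1'' * Q1) + Q1 * Q1''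
      + (Q1' * Q1' + Q1' * Q1' + Q1' * Q1')
      + (Q1' * (Q1 * Q1) + Q1' * (Q1 * Q1) + Q1' * (Q1 * Q1))
      + (Q1 * Q1' * Q1 + Q1 * Q1' * Q1) + Q1 * Q1 * Q1' + Q1 ^ 4 := by
    rw [hQ4, pow_two, hp2]; abel
  -- the main pointwise identities obtained from solutions of the ODE
  have main : ∀ v : Fin n → ℂ,
      (s • (Q1.mulVec v) = A₁.mulVec v + (s-1) • (Q1.mulVec v)) ∧
      ((s^2/2) • (Q2.mulVec v) = A₂.mulVec v + (s-1) • (A₁.mulVec (Q1.mulVec v))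
        + ((s-1)^2/2) • (Q2.mulVec v)) ∧
      ((s^3/6) • (Q3.mulVec v) = A₃.mulVec v + (s-1) • (A₂.mulVec (Q1.mulVec v))
        + ((s-1)^2/2) • (A₁.mulVec (Q2.mulVec v)) + ((s-1)^3/6) • (Q3.mulVec v)) ∧
      ((s^4/24) • (Q4.mulVec v) = A₄.mulVec v + (s-1) • (A₃.mulVec (Q1.mulVec v))
        + ((s-1)^2/2) • (A₂.mulVec (Q2.mulVec v)) + ((s-1)^3/6) • (A₁.mulVec (Q3.mulVec v))
        + ((s-1)^4/24) • (Q4.mulVec v)) := by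
    intro v
    obtain ⟨x, hxt, hxA⟩ := fon_exists_global_solution hA t v
    have hx : ∀ u, HasDerivAt x ((Q u).mulVec (x u)) u := hxA
    set x1 : ℝ → Fin n → ℂ := fun u => (Q u).mulVec (x u) with hx1d
    set x2 : ℝ → Fin n → ℂ :=
      fun u => (deriv Q u).mulVec (x u) + (Q u).mulVec (x1 u) with hx2d
    set x3 : ℝ → Fin n → ℂ := fun u =>
      ((deriv (deriv Q) u).mulVec (x u) + (deriv Q u).mulVec (x1 u)) +
      ((deriv Q u).mulVec (x1 u) + (Q u).mulVec (x2 u)) with hx3d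
    set x4 : ℝ → Fin n → ℂ := fun u =>
      (((deriv (deriv (deriv Q)) u).mulVec (x u) + (deriv (deriv Q) u).mulVec (x1 u)) +
       ((deriv (deriv Q) u).mulVec (x1 u) + (deriv Q u).mulVec (x2 u))) +
      (((deriv (deriv Q) u).mulVec (x1 u) + (deriv Q u).mulVec (x2 u)) +
       ((deriv Q u).mulVec (x2 u) + (Q u).mulVec (x3 u))) with hx4d
    have hx' : ∀ u, HasDerivAt x (x1 u) u := hx
    have hx1 : ∀ u, HasDerivAt x1 (x2 u) u := fun u =>
      fon_hasDerivAt_mulVec (hd0 u) (hx u)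
    have hx2 : ∀ u, HasDerivAt x2 (x3 u) u := fun u =>
      (fon_hasDerivAt_mulVec (hd1 u) (hx' u)).add (fon_hasDerivAt_mulVec (hd0 u) (hx1 u))
    have hx3 : ∀ u, HasDerivAt x3 (x4 u) u := fun u =>
      ((fon_hasDerivAt_mulVec (hd2 u) (hx' u)).add
        (fon_hasDerivAt_mulVec (hd1 u) (hx1 u))).add
      ((fon_hasDerivAt_mulVec (hd1 u) (hx1 u)).add
        (fon_hasDerivAt_mulVec (hd0 u) (hx2 u)))
    have hxc : Continuous x := by
      rw [continuous_iff_continuousAt]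
      exact fun u => (hx u).differentiableAt.continuousAt
    have hx1c : Continuous x1 := fon_cont_mulVec hcQ hxc
    have hx2c : Continuous x2 := (fon_cont_mulVec hc1 hxc).add (fon_cont_mulVec hcQ hx1c)
    have hx3c : Continuous x3 :=
      ((fon_cont_mulVec hc2 hxc).add (fon_cont_mulVec hc1 hx1c)).add
      ((fon_cont_mulVec hc1 hx1c).add (fon_cont_mulVec hcQ hx2c))
    have hx4c : Continuous x4 :=
      (((fon_cont_mulVec hc3 hxc).add (fon_cont_mulVec hc2 hx1c)).add
       ((fon_cont_mulVec hc2 hx1c).add (fon_cont_mulVec hc1 hx2c))).add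
      (((fon_cont_mulVec hc2 hx1c).add (fon_cont_mulVec hc1 hx2c)).add
       ((fon_cont_mulVec hc1 hx2c).add (fon_cont_mulVec hcQ hx3c)))
    -- values at t
    have e1 : x1 t = Q1.mulVec v := by
      simp only [hx1d]
      rw [hxt, hQ1]
    have e2 : x2 t = Q2.mulVec v := by
      simp only [hx2d, hx1d]
      rw [hxt, hD1t, ← hQ1, hQ2]
      simp [Matrix.add_mulVec, ← Matrix.mulVec_mulVec, hp2]
    have e3 : x3 t = Q3.mulVec v := by
      simp only [hx3d, hx2d, hx1d]
      rw [hxt, hD1t, hD2t, ← hQ1, hQ3']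
      simp only [Matrix.add_mulVec, Matrix.mulVec_add, ← Matrix.mulVec_mulVec, hp2, hp3,
        Matrix.mul_add, Matrix.add_mul]
      abel
    have e4 : x4 t = Q4.mulVec v := by
      simp only [hx4d, hx3d, hx2d, hx1d]
      rw [hxt, hD1t, hD2t, hD3t, ← hQ1, hQ4']
      simp only [Matrix.add_mulVec, Matrix.mulVec_add, ← Matrix.mulVec_mulVec, hp2, hp3, hp4,
        Matrix.mul_add, Matrix.add_mul]
      abel
    -- Taylor expansions
    have taylor : ∀ c : ℝ, (fun τ : ℝ => x (t + c * τ) -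
        (x t + τ • (c • x1 t) + (τ ^ 2 / 2) • ((c^2) • x2 t) + (τ ^ 3 / 6) • ((c^3) • x3 t) +
          (τ ^ 4 / 24) • ((c^4) • x4 t))) =o[𝓝 (0:ℝ)] fun τ => τ ^ 4 := by
      intro c
      have hG0 : ∀ τ : ℝ, HasDerivAt (fun τ : ℝ => x (t + c * τ))
          (c • x1 (t + c * τ)) τ := fun τ => fon_comp_chain hx' t c τ
      have hG1 : ∀ τ : ℝ, HasDerivAt (fun τ : ℝ => c • x1 (t + c * τ))
          ((c^2) • x2 (t + c * τ)) τ := by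
        intro τ
        have h' := (fon_comp_chain hx1 t c τ).const_smul c
        have hcc : c • (c • x2 (t + c * τ)) = (c^2) • x2 (t + c * τ) := by
          rw [smul_smul, ← pow_two]
        rw [hcc] at h'
        exact h'
      have hG2 : ∀ τ : ℝ, HasDerivAt (fun τ : ℝ => (c^2) • x2 (t + c * τ))
          ((c^3) • x3 (t + c * τ)) τ := by
        intro τ
        have h' := (fon_comp_chain hx2 t c τ).const_smul (c^2)
        have hcc : (c^2) • (c • x3 (t + c * τ)) = (c^3) • x3 (t + c * τ) := by
          rw [smul_smul, ← pow_succ]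
        rw [hcc] at h'
        exact h'
      have hG3 : ∀ τ : ℝ, HasDerivAt (fun τ : ℝ => (c^3) • x3 (t + c * τ))
          ((c^4) • x4 (t + c * τ)) τ := by
        intro τ
        have h' := (fon_comp_chain hx3 t c τ).const_smul (c^3)
        have hcc : (c^3) • (c • x4 (t + c * τ)) = (c^4) • x4 (t + c * τ) := by
          rw [smul_smul, ← pow_succ]
        rw [hcc] at h'
        exact h'
      have hG4c : Continuous fun τ : ℝ => (c^4) • x4 (t + c * τ) :=
        (hx4c.comp (continuous_const.add (continuous_const.mul continuous_id) :
          Continuous fun τ : ℝ => t + c * τ)).const_smul (c^4)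
      have hT := fon_taylor4 hG0 hG1 hG2 hG3 hG4c 0
      simp only [zero_add, mul_zero, add_zero] at hT
      exact hT
    have hrs := taylor s
    have hrb := taylor (s - 1)
    have hF := h x hx
    set Tm : ℝ → Matrix (Fin n) (Fin n) ℂ :=
      fun τ => 1 + τ • A₁ + τ ^ 2 • A₂ + τ ^ 3 • A₃ + τ ^ 4 • A₄ with hTmd
    have hTmc : Continuous Tm := by
      rw [hTmd]
      exact (((continuous_const.add (continuous_id'.smul continuous_const)).add
        ((continuous_pow 2).smul continuous_const)).add
        ((continuous_pow 3).smul continuous_const)).add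
        ((continuous_pow 4).smul continuous_const)
    have hmul_o : ∀ r : ℝ → Fin n → ℂ, r =o[𝓝 (0:ℝ)] (fun τ => τ ^ 4) →
        (fun τ => (Tm τ).mulVec (r τ)) =o[𝓝 (0:ℝ)] (fun τ => τ ^ 4) := by
      intro r hr
      have h1 : Filter.Tendsto (fun τ => ‖fonPhi n (Tm τ)‖) (𝓝 (0:ℝ))
          (𝓝 ‖fonPhi n (Tm 0)‖) := (((fonPhi n).continuous.comp hTmc).norm).tendsto 0
      have h2 : ∀ᶠ τ in 𝓝 (0:ℝ), ‖fonPhi n (Tm τ)‖ ≤ ‖fonPhi n (Tm 0)‖ + 1 :=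
        h1.eventually (eventually_le_nhds (lt_add_one _))
      have h3 : (fun τ => (Tm τ).mulVec (r τ)) =O[𝓝 (0:ℝ)] r := by
        rw [Asymptotics.isBigO_iff]
        refine ⟨‖fonPhi n (Tm 0)‖ + 1, ?_⟩
        filter_upwards [h2] with τ hτ
        calc ‖(Tm τ).mulVec (r τ)‖ = ‖fonPhi n (Tm τ) (r τ)‖ := rfl
          _ ≤ ‖fonPhi n (Tm τ)‖ * ‖r τ‖ := (fonPhi n (Tm τ)).le_opNorm _
          _ ≤ (‖fonPhi n (Tm 0)‖ + 1) * ‖r τ‖ :=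
              mul_le_mul_of_nonneg_right hτ (norm_nonneg _)
      exact h3.trans_isLittleO hr
    have hpoly : (fun τ : ℝ => (x t + τ • (s • x1 t) + (τ ^ 2 / 2) • ((s^2) • x2 t)
          + (τ ^ 3 / 6) • ((s^3) • x3 t) + (τ ^ 4 / 24) • ((s^4) • x4 t))
        - (Tm τ).mulVec (x t + τ • ((s-1) • x1 t) + (τ ^ 2 / 2) • (((s-1)^2) • x2 t)
          + (τ ^ 3 / 6) • (((s-1)^3) • x3 t) + (τ ^ 4 / 24) • (((s-1)^4) • x4 t)))
        =o[𝓝 (0:ℝ)] fun τ => τ ^ 4 := by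
      refine ((hF.sub (hrs.sub (hmul_o _ hrb))).congr'
        (Filter.Eventually.of_forall fun τ => ?_) Filter.EventuallyEq.rfl)
      simp only [Matrix.mulVec_sub]
      abel
    -- nested coefficient extraction
    set b1 : Fin n → ℂ := s • x1 t - (A₁.mulVec (x t) + (s-1) • x1 t) with hb1d
    set b2 : Fin n → ℂ := (s^2/2) • x2 t - (A₂.mulVec (x t) + (s-1) • (A₁.mulVec (x1 t))
      + ((s-1)^2/2) • x2 t) with hb2d
    set b3 : Fin n → ℂ := (s^3/6) • x3 t - (A₃.mulVec (x t) + (s-1) • (A₂.mulVec (x1 t))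
      + ((s-1)^2/2) • (A₁.mulVec (x2 t)) + ((s-1)^3/6) • x3 t) with hb3d
    set b4 : Fin n → ℂ := (s^4/24) • x4 t - (A₄.mulVec (x t) + (s-1) • (A₃.mulVec (x1 t))
      + ((s-1)^2/2) • (A₂.mulVec (x2 t)) + ((s-1)^3/6) • (A₁.mulVec (x3 t))
      + ((s-1)^4/24) • x4 t) with hb4d
    set b5 : Fin n → ℂ := -((s-1) • (A₄.mulVec (x1 t)) + ((s-1)^2/2) • (A₃.mulVec (x2 t))
      + ((s-1)^3/6) • (A₂.mulVec (x3 t)) + ((s-1)^4/24) • (A₁.mulVec (x4 t))) with hb5d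
    set b6 : Fin n → ℂ := -(((s-1)^2/2) • (A₄.mulVec (x2 t)) + ((s-1)^3/6) • (A₃.mulVec (x3 t))
      + ((s-1)^4/24) • (A₂.mulVec (x4 t))) with hb6d
    set b7 : Fin n → ℂ := -(((s-1)^3/6) • (A₄.mulVec (x3 t))
      + ((s-1)^4/24) • (A₃.mulVec (x4 t))) with hb7d
    set b8 : Fin n → ℂ := -(((s-1)^4/24) • (A₄.mulVec (x4 t))) with hb8d
    have hO : (fun τ : ℝ => (0 : Fin n → ℂ) +
        τ • (b1 + τ • (b2 + τ • (b3 + τ • (b4 + τ • (b5 + τ • (b6 + τ • (b7 + τ • b8))))))))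
        =o[𝓝[≠] (0:ℝ)] fun τ => τ ^ 4 := by
      refine ((hpoly.mono nhdsWithin_le_nhds).congr'
        (Filter.Eventually.of_forall fun τ => ?_) Filter.EventuallyEq.rfl)
      simp only [hTmd, hb1d, hb2d, hb3d, hb4d, hb5d, hb6d, hb7d, hb8d,
        Matrix.add_mulVec, Matrix.mulVec_add, Matrix.mulVec_smul,
        Matrix.smul_mulVec, Matrix.one_mulVec]
      module
    have cg5 : Continuous (fun τ : ℝ => b5 + τ • (b6 + τ • (b7 + τ • b8))) :=
      continuous_const.add (continuous_id.smul (continuous_const.add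
        (continuous_id.smul (continuous_const.add (continuous_id.smul continuous_const)))))
    have cg4 : Continuous (fun τ : ℝ => b4 + τ • (b5 + τ • (b6 + τ • (b7 + τ • b8)))) :=
      continuous_const.add (continuous_id.smul cg5)
    have cg3 : Continuous (fun τ : ℝ =>
        b3 + τ • (b4 + τ • (b5 + τ • (b6 + τ • (b7 + τ • b8))))) :=
      continuous_const.add (continuous_id.smul cg4)
    have cg2 : Continuous (fun τ : ℝ =>
        b2 + τ • (b3 + τ • (b4 + τ • (b5 + τ • (b6 + τ • (b7 + τ • b8)))))) :=
      continuous_const.add (continuous_id.smul cg3)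
    have cg1 : Continuous (fun τ : ℝ =>
        b1 + τ • (b2 + τ • (b3 + τ • (b4 + τ • (b5 + τ • (b6 + τ • (b7 + τ • b8)))))))  :=
      continuous_const.add (continuous_id.smul cg2)
    obtain ⟨-, hO1⟩ := fon_coeff_step (m := 3) cg1.continuousAt hO
    obtain ⟨hb1z, hO2⟩ := fon_coeff_step (m := 2) cg2.continuousAt hO1
    obtain ⟨hb2z, hO3⟩ := fon_coeff_step (m := 1) cg3.continuousAt hO2
    obtain ⟨hb3z, hO4⟩ := fon_coeff_step (m := 0) cg4.continuousAt hO3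
    have hb4z : b4 = 0 := fon_coeff_last (m := 0) cg5.continuousAt hO4
    rw [hb1d] at hb1z
    rw [hb2d] at hb2z
    rw [hb3d] at hb3z
    rw [hb4d] at hb4z
    have h1 := sub_eq_zero.mp hb1z
    have h2 := sub_eq_zero.mp hb2z
    have h3 := sub_eq_zero.mp hb3z
    have h4 := sub_eq_zero.mp hb4z
    rw [hxt, e1] at h1 h2 h3 h4
    rw [e2] at h2 h3 h4
    rw [e3] at h3 h4
    rw [e4] at h4
    exact ⟨h1, h2, h3, h4⟩
  -- from the pointwise identities to matrix identities
  have ME1 : s • Q1 = A₁ + (s-1) • Q1 := by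
    apply fon_mulVec_ext
    intro v
    have h1 := (main v).1
    simp only [Matrix.add_mulVec, Matrix.smul_mulVec]
    exact h1
  have hA1 : A₁ = Q1 := by
    have h' := eq_sub_of_add_eq ME1.symm
    rw [h']
    module
  have ME2 : ((s^2/2 : ℝ)) • Q2 = A₂ + ((s-1 : ℝ)) • (A₁ * Q1)
      + (((s-1)^2/2 : ℝ)) • Q2 := by
    apply fon_mulVec_ext
    intro v
    have h1 := (main v).2.1
    simp only [Matrix.add_mulVec, Matrix.smul_mulVec, ← Matrix.mulVec_mulVec]
    exact h1
  have hA2 : A₂ = T2 := by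
    have h' := ME2
    rw [hA1] at h'
    have h2 := eq_sub_of_add_eq (eq_sub_of_add_eq h'.symm)
    rw [hT2, h2, hp2]
    module
  have ME3 : ((s^3/6 : ℝ)) • Q3 = A₃ + ((s-1 : ℝ)) • (A₂ * Q1)
      + (((s-1)^2/2 : ℝ)) • (A₁ * Q2) + (((s-1)^3/6 : ℝ)) • Q3 := by
    apply fon_mulVec_ext
    intro v
    have h1 := (main v).2.2.1
    simp only [Matrix.add_mulVec, Matrix.smul_mulVec, ← Matrix.mulVec_mulVec]
    exact h1
  have hA3 : A₃ = T3 := by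
    have h' := ME3
    rw [hA1, hA2] at h'
    have h2 := eq_sub_of_add_eq (eq_sub_of_add_eq (eq_sub_of_add_eq h'.symm))
    rw [hT3, h2, hT2, sub_mul, smul_mul_assoc, smul_mul_assoc,
      show Q1 ^ 3 = Q1 ^ 2 * Q1 from pow_succ Q1 2]
    module
  have ME4 : ((s^4/24 : ℝ)) • Q4 = A₄ + ((s-1 : ℝ)) • (A₃ * Q1)
      + (((s-1)^2/2 : ℝ)) • (A₂ * Q2) + (((s-1)^3/6 : ℝ)) • (A₁ * Q3)
      + (((s-1)^4/24 : ℝ)) • Q4 := by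
    apply fon_mulVec_ext
    intro v
    have h1 := (main v).2.2.2
    simp only [Matrix.add_mulVec, Matrix.smul_mulVec, ← Matrix.mulVec_mulVec]
    exact h1
  have hA4 : A₄ = T4 := by
    have h' := ME4
    rw [hA1, hA2, hA3] at h'
    have h2 := eq_sub_of_add_eq (eq_sub_of_add_eq (eq_sub_of_add_eq (eq_sub_of_add_eq h'.symm)))
    rw [hT4, h2]
    module
  exact ⟨hA1, hA2, hA3, hA4⟩
end

section
/- Let A, B, C ∈ Mₙ(ℂ) and define F₃ = C/24 + (BA − AB)/12. Then as τ → 0 (τ real), exp(τ·A + τ³·F₃) = I + τ·A + (τ²/2)·A² + τ³·(A³/6 + C/24 + (BA − AB)/12) + τ⁴·(A⁴/24 + (AC + CA)/48 + (BA² − A²B)/24) + O(τ⁵), where exp denotes the matrix exponential. (This is the fourth-order exponential scheme ES4: its Maclaurin expansion reproduces the symmetric fourth-order transition operator through order τ⁴.) -/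
open Matrix Filter Asymptotics
open scoped Topology

section Aux

/-- Tail bound for the exponential series in a complex Banach algebra. -/
theorem ES4_exp_tail_bound {𝔸 : Type*} [NormedRing 𝔸] [NormedAlgebra ℂ 𝔸] [CompleteSpace 𝔸]
    (x : 𝔸) :
    ‖NormedSpace.exp x - ∑ k ∈ Finset.range 5, ((k.factorial : ℂ))⁻¹ • x ^ k‖
      ≤ ‖x‖ ^ 5 * Real.exp ‖x‖ := by
  set f : ℕ → 𝔸 := fun k => ((k.factorial : ℂ))⁻¹ • x ^ k with hf
  have hs : HasSum f (NormedSpace.exp x) := NormedSpace.exp_series_hasSum_exp' x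
  have hsum := hs.summable
  have key : NormedSpace.exp x - ∑ k ∈ Finset.range 5, f k = ∑' k, f (k + 5) := by
    have h2 := Summable.sum_add_tsum_nat_add 5 hsum
    rw [hs.tsum_eq] at h2
    rw [← h2, add_sub_cancel_left]
  rw [key]
  have hnorm : ∀ k : ℕ, ‖f (k + 5)‖ ≤ ‖x‖ ^ 5 * (‖x‖ ^ k / k.factorial) := by
    intro k
    have h1 : ‖((((k + 5).factorial : ℕ) : ℂ))⁻¹‖ = (((k + 5).factorial : ℕ) : ℝ)⁻¹ := by
      rw [norm_inv, Complex.norm_natCast]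
    have h2 : ‖x ^ (k + 5)‖ ≤ ‖x‖ ^ (k + 5) := norm_pow_le' x (by omega)
    have h3 : ((k.factorial : ℕ) : ℝ) ≤ (((k + 5).factorial : ℕ) : ℝ) := by
      exact_mod_cast Nat.factorial_le (Nat.le_add_right k 5)
    have h4 : (0:ℝ) < k.factorial := by exact_mod_cast k.factorial_pos
    calc ‖f (k + 5)‖ = ‖((((k + 5).factorial : ℕ) : ℂ))⁻¹‖ * ‖x ^ (k + 5)‖ := norm_smul _ _
      _ ≤ (((k + 5).factorial : ℕ) : ℝ)⁻¹ * ‖x‖ ^ (k + 5) := by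
          rw [h1]; gcongr
      _ ≤ ((k.factorial : ℕ) : ℝ)⁻¹ * ‖x‖ ^ (k + 5) := by
          gcongr
      _ = ‖x‖ ^ 5 * (‖x‖ ^ k / k.factorial) := by
          rw [pow_add]; field_simp
  have hsum2 : Summable (fun k : ℕ => ‖x‖ ^ 5 * (‖x‖ ^ k / k.factorial)) :=
    (Real.summable_pow_div_factorial ‖x‖).mul_left _
  calc ‖∑' k, f (k + 5)‖ ≤ ∑' k : ℕ, ‖x‖ ^ 5 * (‖x‖ ^ k / k.factorial) :=
        tsum_of_norm_bounded hsum2.hasSum hnorm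
    _ = ‖x‖ ^ 5 * ∑' k : ℕ, (‖x‖ ^ k / k.factorial) := tsum_mul_left
    _ = ‖x‖ ^ 5 * Real.exp ‖x‖ := by
        rw [Real.exp_eq_exp_ℝ, NormedSpace.exp_eq_tsum_div]

/-- Entrywise bound for the remainder of the degree-4 Taylor polynomial of
`exp (τ•A + τ³•F)`. -/
theorem ES4_entry_bound {n : ℕ} (A F : Matrix (Fin n) (Fin n) ℂ) :
    ∃ K : ℝ, 0 ≤ K ∧ ∀ τ : ℝ, |τ| ≤ 1 → ∀ i j,
      ‖(NormedSpace.exp (τ • A + τ ^ 3 • F)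
        - ∑ k ∈ Finset.range 5, ((k.factorial : ℂ))⁻¹ • (τ • A + τ ^ 3 • F) ^ k) i j‖
        ≤ K * |τ| ^ 5 := by
  letI : SeminormedRing (Matrix (Fin n) (Fin n) ℂ) := Matrix.linftyOpSemiNormedRing
  letI : NormedRing (Matrix (Fin n) (Fin n) ℂ) := Matrix.linftyOpNormedRing
  letI : NormedAlgebra ℂ (Matrix (Fin n) (Fin n) ℂ) := Matrix.linftyOpNormedAlgebra
  have hentry : ∀ (M : Matrix (Fin n) (Fin n) ℂ) (i j : Fin n), ‖M i j‖ ≤ ‖M‖ := by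
    intro M i j
    have h1 : ‖M i j‖₊ ≤ ∑ j', ‖M i j'‖₊ :=
      Finset.single_le_sum (f := fun j' => ‖M i j'‖₊) (fun _ _ => zero_le) (Finset.mem_univ j)
    have h2 : (∑ j', ‖M i j'‖₊) ≤ Finset.univ.sup (fun i => ∑ j', ‖M i j'‖₊) :=
      Finset.le_sup (f := fun i => ∑ j', ‖M i j'‖₊) (Finset.mem_univ i)
    have h3 : ‖M i j‖₊ ≤ ‖M‖₊ := by
      rw [Matrix.linfty_opNNNorm_def]; exact h1.trans h2
    exact_mod_cast h3
  set c : ℝ := ‖A‖ + ‖F‖ with hc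
  have hc0 : 0 ≤ c := by positivity
  refine ⟨c ^ 5 * Real.exp c, by positivity, ?_⟩
  intro τ hτ i j
  set x : Matrix (Fin n) (Fin n) ℂ := τ • A + τ ^ 3 • F with hx
  have hτ3 : |τ| ^ 3 ≤ |τ| := pow_le_of_le_one (abs_nonneg τ) hτ (by norm_num)
  have hxc : ‖x‖ ≤ |τ| * c := by
    calc ‖x‖ ≤ ‖τ • A‖ + ‖τ ^ 3 • F‖ := norm_add_le _ _
      _ = |τ| * ‖A‖ + |τ| ^ 3 * ‖F‖ := by
          rw [norm_smul, norm_smul, Real.norm_eq_abs, Real.norm_eq_abs, abs_pow]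
      _ ≤ |τ| * ‖A‖ + |τ| * ‖F‖ := by
          have := norm_nonneg F; nlinarith
      _ = |τ| * c := by rw [hc]; ring
  have hxc' : ‖x‖ ≤ c := by nlinarith [norm_nonneg x, abs_nonneg τ]
  calc ‖(NormedSpace.exp x - ∑ k ∈ Finset.range 5, ((k.factorial : ℂ))⁻¹ • x ^ k) i j‖
      ≤ ‖NormedSpace.exp x - ∑ k ∈ Finset.range 5, ((k.factorial : ℂ))⁻¹ • x ^ k‖ :=
        hentry _ i j
    _ ≤ ‖x‖ ^ 5 * Real.exp ‖x‖ := ES4_exp_tail_bound x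
    _ ≤ (|τ| * c) ^ 5 * Real.exp c :=
        mul_le_mul (pow_le_pow_left₀ (norm_nonneg x) hxc 5)
          (Real.exp_le_exp.2 hxc') (Real.exp_pos _).le (by positivity)
    _ = c ^ 5 * Real.exp c * |τ| ^ 5 := by ring

theorem ES4_eventually_abs_le_one : ∀ᶠ τ : ℝ in 𝓝 (0:ℝ), |τ| ≤ 1 := by
  filter_upwards [Metric.ball_mem_nhds (0:ℝ) one_pos] with τ hτ
  rw [Metric.mem_ball, Real.dist_eq, sub_zero] at hτ
  exact hτ.le

end Aux

attribute [local instance] Matrix.normedAddCommGroup Matrix.normedSpace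

/-- Monomial terms of order at least `5` are `O(τ⁵)` near `0`. -/
theorem ES4_pow_smul_isBigO {E : Type*} [NormedAddCommGroup E] [NormedSpace ℝ E]
    (M : E) {m : ℕ} (hm : 5 ≤ m) :
    (fun τ : ℝ => τ ^ m • M) =O[𝓝 0] fun τ => τ ^ 5 := by
  rw [isBigO_iff]
  refine ⟨‖M‖, ?_⟩
  filter_upwards [ES4_eventually_abs_le_one] with τ hτ
  rw [norm_smul, Real.norm_eq_abs, abs_pow, Real.norm_eq_abs, abs_pow]
  calc |τ| ^ m * ‖M‖ ≤ |τ| ^ 5 * ‖M‖ :=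
        mul_le_mul_of_nonneg_right (pow_le_pow_of_le_one (abs_nonneg τ) hτ hm) (norm_nonneg M)
    _ = ‖M‖ * |τ| ^ 5 := mul_comm _ _

set_option maxHeartbeats 1600000 in
/-- Polynomial identity: the degree-4 Taylor polynomial of `exp (τ•A + τ³•F)` differs from
the fourth-order transition operator by terms of order `τ⁵` and higher. -/
theorem ES4_poly_id {n : ℕ} (A F : Matrix (Fin n) (Fin n) ℂ) (τ : ℝ) :
    (∑ k ∈ Finset.range 5, ((k.factorial : ℂ))⁻¹ • (τ • A + τ ^ 3 • F) ^ k)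
    - (1 + τ • A + (τ ^ 2 / 2 : ℝ) • A ^ 2 + τ ^ 3 • ((6:ℝ)⁻¹ • A ^ 3 + F)
        + τ ^ 4 • ((24:ℝ)⁻¹ • A ^ 4 + (2:ℝ)⁻¹ • (A * F + F * A)))
    = τ ^ 5 • ((6:ℝ)⁻¹ • (A*A*F + A*F*A + F*A*A))
      + τ ^ 6 • ((2:ℝ)⁻¹ • (F*F) + (24:ℝ)⁻¹ • (A*A*A*F + A*A*F*A + A*F*A*A + F*A*A*A))
      + τ ^ 7 • ((6:ℝ)⁻¹ • (A*F*F + F*A*F + F*F*A))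
      + τ ^ 8 • ((24:ℝ)⁻¹ • (A*A*F*F + A*F*A*F + A*F*F*A + F*A*A*F + F*A*F*A + F*F*A*A))
      + τ ^ 9 • ((6:ℝ)⁻¹ • (F*F*F))
      + τ ^ 10 • ((24:ℝ)⁻¹ • (A*F*F*F + F*A*F*F + F*F*A*F + F*F*F*A))
      + τ ^ 12 • ((24:ℝ)⁻¹ • (F*F*F*F)) := by
  simp only [Finset.sum_range_succ, Finset.sum_range_zero, Nat.factorial]
  norm_num
  simp only [← Complex.coe_smul]
  simp only [pow_succ, pow_zero, one_mul, mul_add, add_mul, smul_add, smul_smul,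
    mul_smul_comm, smul_mul_assoc, mul_assoc]
  match_scalars <;> push_cast <;> ring

/-- Maclaurin expansion of the ES4 exponential scheme
`exp(τ·A + τ³·F₃)` agrees with the symmetric fourth-order transition operator through `τ⁴`. -/
theorem ES4_expansion
    {n : ℕ} (A B C : Matrix (Fin n) (Fin n) ℂ)
    (F₃ : Matrix (Fin n) (Fin n) ℂ)
    (hF₃ : F₃ = (24 : ℝ)⁻¹ • C + (12 : ℝ)⁻¹ • (B * A - A * B)) :
    (fun τ : ℝ =>
        NormedSpace.exp (τ • A + τ ^ 3 • F₃) -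
          (1 + τ • A + (τ ^ 2 / 2 : ℝ) • A ^ 2
            + τ ^ 3 • ((6 : ℝ)⁻¹ • A ^ 3 + (24 : ℝ)⁻¹ • C + (12 : ℝ)⁻¹ • (B * A - A * B))
            + τ ^ 4 • ((24 : ℝ)⁻¹ • A ^ 4 + (48 : ℝ)⁻¹ • (A * C + C * A)
              + (24 : ℝ)⁻¹ • (B * A ^ 2 - A ^ 2 * B))))
      =O[𝓝 0] fun τ => τ ^ 5 := by
  have e3 : (6 : ℝ)⁻¹ • A ^ 3 + (24 : ℝ)⁻¹ • C + (12 : ℝ)⁻¹ • (B * A - A * B)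
      = (6:ℝ)⁻¹ • A ^ 3 + F₃ := by rw [hF₃, add_assoc]
  have e4 : (24 : ℝ)⁻¹ • A ^ 4 + (48 : ℝ)⁻¹ • (A * C + C * A)
        + (24 : ℝ)⁻¹ • (B * A ^ 2 - A ^ 2 * B)
      = (24:ℝ)⁻¹ • A ^ 4 + (2:ℝ)⁻¹ • (A * F₃ + F₃ * A) := by
    rw [hF₃]
    simp only [mul_add, add_mul, mul_sub, sub_mul, smul_add, smul_sub, smul_smul,
      mul_smul_comm, smul_mul_assoc, sq, mul_assoc, pow_succ, pow_zero, one_mul]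
    match_scalars <;> norm_num
  simp only [e3, e4]
  obtain ⟨K, hK0, hK⟩ := ES4_entry_bound A F₃
  have hmain : ∀ τ : ℝ,
      NormedSpace.exp (τ • A + τ ^ 3 • F₃)
        - (1 + τ • A + (τ ^ 2 / 2 : ℝ) • A ^ 2 + τ ^ 3 • ((6:ℝ)⁻¹ • A ^ 3 + F₃)
            + τ ^ 4 • ((24:ℝ)⁻¹ • A ^ 4 + (2:ℝ)⁻¹ • (A * F₃ + F₃ * A)))
      = (NormedSpace.exp (τ • A + τ ^ 3 • F₃)
          - ∑ k ∈ Finset.range 5, ((k.factorial : ℂ))⁻¹ • (τ • A + τ ^ 3 • F₃) ^ k)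
        + (τ ^ 5 • ((6:ℝ)⁻¹ • (A*A*F₃ + A*F₃*A + F₃*A*A))
          + τ ^ 6 • ((2:ℝ)⁻¹ • (F₃*F₃)
              + (24:ℝ)⁻¹ • (A*A*A*F₃ + A*A*F₃*A + A*F₃*A*A + F₃*A*A*A))
          + τ ^ 7 • ((6:ℝ)⁻¹ • (A*F₃*F₃ + F₃*A*F₃ + F₃*F₃*A))
          + τ ^ 8 • ((24:ℝ)⁻¹ • (A*A*F₃*F₃ + A*F₃*A*F₃ + A*F₃*F₃*A + F₃*A*A*F₃
              + F₃*A*F₃*A + F₃*F₃*A*A))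
          + τ ^ 9 • ((6:ℝ)⁻¹ • (F₃*F₃*F₃))
          + τ ^ 10 • ((24:ℝ)⁻¹ • (A*F₃*F₃*F₃ + F₃*A*F₃*F₃ + F₃*F₃*A*F₃ + F₃*F₃*F₃*A))
          + τ ^ 12 • ((24:ℝ)⁻¹ • (F₃*F₃*F₃*F₃))) := by
    intro τ
    rw [← ES4_poly_id A F₃ τ]
    exact (sub_add_sub_cancel _ _ _).symm
  simp only [hmain]
  refine IsBigO.add ?_ ?_
  · rw [isBigO_iff]
    refine ⟨K, ?_⟩
    filter_upwards [ES4_eventually_abs_le_one] with τ hτ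
    have hnorm5 : ‖(τ:ℝ) ^ 5‖ = |τ| ^ 5 := by rw [Real.norm_eq_abs, abs_pow]
    rw [hnorm5]
    exact (Matrix.norm_le_iff (by positivity)).2 (fun i j => hK τ hτ i j)
  · exact (((((((ES4_pow_smul_isBigO _ (by norm_num)).add
        (ES4_pow_smul_isBigO _ (by norm_num))).add
        (ES4_pow_smul_isBigO _ (by norm_num))).add
        (ES4_pow_smul_isBigO _ (by norm_num))).add
        (ES4_pow_smul_isBigO _ (by norm_num))).add
        (ES4_pow_smul_isBigO _ (by norm_num))).add
        (ES4_pow_smul_isBigO _ (by norm_num)))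
end

section
/- Let A, B, C ∈ Mₙ(ℂ). Then as τ → 0 (τ real), exp(τ·A) + (τ²/12)·(B·exp(τ·A) − exp(τ·A)·B) + (τ³/48)·(exp(τ·A)·C + C·exp(τ·A)) = I + τ·A + (τ²/2)·A² + τ³·(A³/6 + C/24 + (BA − AB)/12) + τ⁴·(A⁴/24 + (AC + CA)/48 + (BA² − A²B)/24) + O(τ⁵), where exp denotes the matrix exponential; i.e., this quasi-exponential expression agrees with the symmetric fourth-order transition operator through order τ⁴. -/
open Matrix Filter Asymptotics
open scoped Topology

attribute [local instance] Matrix.normedAddCommGroup Matrix.normedSpace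

lemma mat_norm_mul_le {n : ℕ} (A B : Matrix (Fin n) (Fin n) ℂ) : ‖A * B‖ ≤ n * ‖A‖ * ‖B‖ := by
  rw [Matrix.norm_le_iff (by positivity)]
  intro i j
  calc ‖(A*B) i j‖ = ‖∑ k, A i k * B k j‖ := by rw [Matrix.mul_apply]
  _ ≤ ∑ k, ‖A i k * B k j‖ := norm_sum_le _ _
  _ ≤ ∑ _k : Fin n, ‖A‖ * ‖B‖ := Finset.sum_le_sum fun k _ => by
        rw [norm_mul]
        gcongr <;> exact Matrix.norm_entry_le_entrywise_sup_norm _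
  _ = n * ‖A‖ * ‖B‖ := by simp [mul_assoc]

lemma mat_norm_pow_le {n : ℕ} (A : Matrix (Fin n) (Fin n) ℂ) (k : ℕ) :
    ‖A ^ k‖ ≤ ((n : ℝ) * ‖A‖) ^ k := by
  induction k with
  | zero =>
    simp only [pow_zero]
    rw [Matrix.norm_le_iff zero_le_one]
    intro i j
    simp [Matrix.one_apply]
    split <;> simp
  | succ k ih =>
    rw [pow_succ, pow_succ]
    calc ‖A ^ k * A‖ ≤ n * ‖A ^ k‖ * ‖A‖ := mat_norm_mul_le _ _
    _ ≤ (n : ℝ) * ((n : ℝ) * ‖A‖) ^ k * ‖A‖ := by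
        have hn : (0:ℝ) ≤ n := by positivity
        have h0 : (0:ℝ) ≤ ‖A‖ := norm_nonneg _
        have h1 : (0:ℝ) ≤ ((n:ℝ) * ‖A‖) ^ k := by positivity
        gcongr
    _ = ((n : ℝ) * ‖A‖) ^ k * ((n : ℝ) * ‖A‖) := by ring

lemma exp_eq_tsum_real {n : ℕ} (A : Matrix (Fin n) (Fin n) ℂ) (τ : ℝ) :
    NormedSpace.exp (τ • A) = ∑' k : ℕ, (τ ^ k / k.factorial : ℝ) • A ^ k := by
  rw [NormedSpace.exp_eq_tsum ℂ]
  refine tsum_congr fun k => ?_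
  ext i j
  simp only [Matrix.smul_apply, smul_pow, smul_eq_mul, Complex.real_smul]
  push_cast
  ring

set_option maxHeartbeats 800000 in
lemma exp_remainder_isBigO {n : ℕ} (A : Matrix (Fin n) (Fin n) ℂ) (m : ℕ) :
    (fun τ : ℝ => NormedSpace.exp (τ • A)
      - ∑ k ∈ Finset.range m, (τ ^ k / k.factorial : ℝ) • A ^ k) =O[𝓝 0] fun τ => τ ^ m := by
  set c : ℝ := (n : ℝ) * ‖A‖ with hc
  have hc0 : 0 ≤ c := by positivity
  have hnorm : ∀ (τ : ℝ) (k : ℕ),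
      ‖(τ ^ k / k.factorial : ℝ) • A ^ k‖ ≤ (|τ| * c) ^ k / k.factorial := by
    intro τ k
    calc ‖(τ ^ k / k.factorial : ℝ) • A ^ k‖ = |τ| ^ k / k.factorial * ‖A ^ k‖ := by
          rw [norm_smul, Real.norm_eq_abs, abs_div, abs_pow, Nat.abs_cast]
    _ ≤ |τ| ^ k / k.factorial * c ^ k := by gcongr; exact mat_norm_pow_le A k
    _ = (|τ| * c) ^ k / k.factorial := by rw [mul_pow]; ring
  have hsum : ∀ τ : ℝ, Summable (fun k => (τ ^ k / k.factorial : ℝ) • A ^ k) := fun τ =>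
    Summable.of_norm_bounded (Real.summable_pow_div_factorial (|τ| * c)) (hnorm τ)
  have hrem : ∀ τ : ℝ, NormedSpace.exp (τ • A)
      - ∑ k ∈ Finset.range m, (τ ^ k / k.factorial : ℝ) • A ^ k
      = ∑' i : ℕ, ((τ ^ (i + m) / (i + m).factorial : ℝ) • A ^ (i + m)) := by
    intro τ
    rw [exp_eq_tsum_real, ← Summable.sum_add_tsum_nat_add m (hsum τ)]
    abel
  rw [isBigO_iff]
  refine ⟨∑' i : ℕ, c ^ (i + m) / (i + m).factorial, ?_⟩
  have h1 : ∀ᶠ τ : ℝ in 𝓝 0, |τ| ≤ 1 := by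
    filter_upwards [Metric.ball_mem_nhds (0:ℝ) one_pos] with τ hτ
    rw [Metric.mem_ball, Real.dist_eq, sub_zero] at hτ; exact hτ.le
  filter_upwards [h1] with τ hτ
  rw [hrem τ]
  have hsumc : Summable (fun i : ℕ => c ^ (i + m) / (i + m).factorial) :=
    (summable_nat_add_iff m).mpr (Real.summable_pow_div_factorial c)
  have hsumn : Summable (fun i : ℕ => ‖(τ ^ (i + m) / (i + m).factorial : ℝ) • A ^ (i + m)‖) := by
    refine Summable.of_nonneg_of_le (fun i => norm_nonneg _) (fun i => hnorm τ (i + m)) ?_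
    exact (summable_nat_add_iff m).mpr (Real.summable_pow_div_factorial (|τ| * c))
  have key : ∀ i : ℕ, ‖(τ ^ (i + m) / (i + m).factorial : ℝ) • A ^ (i + m)‖
      ≤ |τ| ^ m * (c ^ (i + m) / (i + m).factorial) := by
    intro i
    calc ‖(τ ^ (i + m) / (i + m).factorial : ℝ) • A ^ (i + m)‖
        ≤ (|τ| * c) ^ (i + m) / (i + m).factorial := hnorm τ (i + m)
    _ = |τ| ^ m * |τ| ^ i * c ^ (i + m) / (i + m).factorial := by
        rw [mul_pow, pow_add]; ring
    _ ≤ |τ| ^ m * 1 * c ^ (i + m) / (i + m).factorial := by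
        gcongr
        exact pow_le_one₀ (abs_nonneg τ) hτ
    _ = |τ| ^ m * (c ^ (i + m) / (i + m).factorial) := by ring
  calc ‖∑' i : ℕ, ((τ ^ (i + m) / (i + m).factorial : ℝ) • A ^ (i + m))‖
      ≤ ∑' i : ℕ, ‖(τ ^ (i + m) / (i + m).factorial : ℝ) • A ^ (i + m)‖ :=
        norm_tsum_le_tsum_norm hsumn
  _ ≤ ∑' i : ℕ, |τ| ^ m * (c ^ (i + m) / (i + m).factorial) :=
        Summable.tsum_le_tsum key hsumn (hsumc.mul_left _)
  _ = |τ| ^ m * ∑' i : ℕ, c ^ (i + m) / (i + m).factorial := tsum_mul_left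
  _ ≤ (∑' i : ℕ, c ^ (i + m) / (i + m).factorial) * ‖τ ^ m‖ := by
        rw [Real.norm_eq_abs, abs_pow, mul_comm]

lemma isBigO_mul_left {l : Filter ℝ} {g : ℝ → ℝ} {n : ℕ} (M : Matrix (Fin n) (Fin n) ℂ)
    {f : ℝ → Matrix (Fin n) (Fin n) ℂ} (h : f =O[l] g) : (fun τ => M * f τ) =O[l] g :=
  IsBigO.trans
    (isBigO_iff.mpr ⟨n * ‖M‖, Eventually.of_forall fun τ => by
      simpa using mat_norm_mul_le M (f τ)⟩) h

lemma isBigO_mul_right {l : Filter ℝ} {g : ℝ → ℝ} {n : ℕ} (M : Matrix (Fin n) (Fin n) ℂ)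
    {f : ℝ → Matrix (Fin n) (Fin n) ℂ} (h : f =O[l] g) : (fun τ => f τ * M) =O[l] g :=
  IsBigO.trans
    (isBigO_iff.mpr ⟨n * ‖M‖, Eventually.of_forall fun τ => by
      calc ‖f τ * M‖ ≤ ↑n * ‖f τ‖ * ‖M‖ := mat_norm_mul_le (f τ) M
      _ = ↑n * ‖M‖ * ‖f τ‖ := by ring⟩) h

/-- the quasi-exponential expression agrees with the symmetric fourth-order
transition operator through order `τ⁴`. -/
theorem quasi_exponential_expansion
    {n : ℕ} (A B C : Matrix (Fin n) (Fin n) ℂ) :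
    (fun τ : ℝ =>
        (NormedSpace.exp (τ • A)
          + (τ ^ 2 / 12 : ℝ) • (B * NormedSpace.exp (τ • A) - NormedSpace.exp (τ • A) * B)
          + (τ ^ 3 / 48 : ℝ) • (NormedSpace.exp (τ • A) * C + C * NormedSpace.exp (τ • A))) -
          (1 + τ • A + (τ ^ 2 / 2 : ℝ) • A ^ 2
            + τ ^ 3 • ((6 : ℝ)⁻¹ • A ^ 3 + (24 : ℝ)⁻¹ • C + (12 : ℝ)⁻¹ • (B * A - A * B))
            + τ ^ 4 • ((24 : ℝ)⁻¹ • A ^ 4 + (48 : ℝ)⁻¹ • (A * C + C * A)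
              + (24 : ℝ)⁻¹ • (B * A ^ 2 - A ^ 2 * B))))
      =O[𝓝 0] fun τ => τ ^ 5 := by
  have h5 := exp_remainder_isBigO A 5
  have h3 := exp_remainder_isBigO A 3
  have h2 := exp_remainder_isBigO A 2
  set R : ℕ → ℝ → Matrix (Fin n) (Fin n) ℂ := fun m τ =>
    NormedSpace.exp (τ • A) - ∑ k ∈ Finset.range m, (τ ^ k / k.factorial : ℝ) • A ^ k with hR
  have p1 : (fun τ : ℝ => R 5 τ) =O[𝓝 0] fun τ => τ ^ 5 := h5
  have p2 : (fun τ : ℝ => (τ ^ 2 / 12 : ℝ) • (B * R 3 τ - R 3 τ * B)) =O[𝓝 0]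
      fun τ => τ ^ 5 := by
    have hb : (fun τ : ℝ => B * R 3 τ - R 3 τ * B) =O[𝓝 0] fun τ => τ ^ 3 :=
      (isBigO_mul_left B h3).sub (isBigO_mul_right B h3)
    have hs : (fun τ : ℝ => (τ ^ 2 / 12 : ℝ)) =O[𝓝 0] fun τ => τ ^ 2 := by
      have : (fun τ : ℝ => (τ ^ 2 / 12 : ℝ)) = fun τ : ℝ => (12 : ℝ)⁻¹ * τ ^ 2 := by
        funext τ; ring
      rw [this]
      exact (isBigO_refl (fun τ : ℝ => τ ^ 2) _).const_mul_left _
    have := hs.smul hb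
    exact this.congr_right fun τ => by simp [smul_eq_mul]; ring
  have p3 : (fun τ : ℝ => (τ ^ 3 / 48 : ℝ) • (R 2 τ * C + C * R 2 τ)) =O[𝓝 0]
      fun τ => τ ^ 5 := by
    have hb : (fun τ : ℝ => R 2 τ * C + C * R 2 τ) =O[𝓝 0] fun τ => τ ^ 2 :=
      (isBigO_mul_right C h2).add (isBigO_mul_left C h2)
    have hs : (fun τ : ℝ => (τ ^ 3 / 48 : ℝ)) =O[𝓝 0] fun τ => τ ^ 3 := by
      have : (fun τ : ℝ => (τ ^ 3 / 48 : ℝ)) = fun τ : ℝ => (48 : ℝ)⁻¹ * τ ^ 3 := by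
        funext τ; ring
      rw [this]
      exact (isBigO_refl (fun τ : ℝ => τ ^ 3) _).const_mul_left _
    have := hs.smul hb
    exact this.congr_right fun τ => by simp [smul_eq_mul]; ring
  refine ((p1.add p2).add p3).congr_left fun τ => ?_
  simp only [hR, Finset.sum_range_succ, Finset.sum_range_zero, zero_add, pow_zero, pow_one,
    Nat.factorial, Nat.cast_ofNat, Nat.cast_one]
  norm_num
  simp only [mul_sub, sub_mul, mul_add, add_mul, smul_sub, smul_add, mul_smul_comm,
    smul_mul_assoc, mul_one, one_mul, smul_smul]
  module
end

section
/- Let A, B, C ∈ Mₙ(ℂ). Then as τ → 0 (τ real), the triple-exponential matrix T(τ) = exp((τ²/12)·B + (τ³/48)·C) · exp(τ·A) · exp(−(τ²/12)·B + (τ³/48)·C) satisfies T(τ) = I + τ·A + (τ²/2)·A² + τ³·(A³/6 + C/24 + (BA − AB)/12) + τ⁴·(A⁴/24 + (AC + CA)/48 + (BA² − A²B)/24) + O(τ⁵); i.e., the triple-exponential scheme TES4 agrees with the symmetric fourth-order transition operator through order τ⁴. -/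
open Matrix Filter Asymptotics
open scoped Topology Nat
set_option maxHeartbeats 1000000
attribute [local instance] Matrix.normedAddCommGroup Matrix.normedSpace

variable {n : ℕ}
local notation "Mat" => Matrix (Fin n) (Fin n) ℂ

lemma mynorm_mul (X Y : Mat) : ‖X * Y‖ ≤ n * ‖X‖ * ‖Y‖ := by
  have h0 : (0:ℝ) ≤ n * ‖X‖ * ‖Y‖ := by positivity
  rw [Matrix.norm_le_iff h0]
  intro i j
  calc ‖(X*Y) i j‖ = ‖∑ k, X i k * Y k j‖ := by rw [Matrix.mul_apply]
    _ ≤ ∑ k, ‖X i k * Y k j‖ := norm_sum_le _ _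
    _ ≤ ∑ _k : Fin n, ‖X‖ * ‖Y‖ := by
        refine Finset.sum_le_sum fun k _ => ?_
        rw [norm_mul]
        exact mul_le_mul (Matrix.norm_entry_le_entrywise_sup_norm X)
          (Matrix.norm_entry_le_entrywise_sup_norm Y) (norm_nonneg _) (norm_nonneg _)
    _ = n * ‖X‖ * ‖Y‖ := by simp [mul_assoc]

lemma mynorm_pow (X : Mat) (k : ℕ) : ‖X ^ k‖ ≤ (n * ‖X‖) ^ k := by
  induction k with
  | zero =>
      simp only [pow_zero]
      rw [Matrix.norm_le_iff zero_le_one]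
      intro i j
      simp [Matrix.one_apply]
      split <;> simp
  | succ k ih =>
      calc ‖X ^ (k+1)‖ = ‖X ^ k * X‖ := by rw [pow_succ]
        _ ≤ n * ‖X ^ k‖ * ‖X‖ := mynorm_mul _ _
        _ ≤ n * (n * ‖X‖) ^ k * ‖X‖ := by
            have : (0:ℝ) ≤ (n:ℝ) := by positivity
            gcongr
        _ = (n * ‖X‖) ^ (k+1) := by ring

lemma exp_tail (X : Mat) (m : ℕ) :
    ‖NormedSpace.exp X - ∑ k ∈ Finset.range m, ((k ! : ℝ))⁻¹ • X ^ k‖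
      ≤ (n * ‖X‖) ^ m * Real.exp (n * ‖X‖) := by
  have hc : ∀ k : ℕ, ((k ! : ℝ))⁻¹ • X ^ k = ((k ! : ℂ))⁻¹ • X ^ k := by
    intro k
    rw [show ((k ! : ℂ)) = (((k ! : ℝ)) : ℂ) by push_cast; ring, ← Complex.ofReal_inv,
      Complex.coe_smul]
  set r : ℝ := n * ‖X‖ with hr
  have hr0 : 0 ≤ r := by positivity
  have hbound : ∀ k, ‖((k ! : ℝ))⁻¹ • X ^ k‖ ≤ r ^ k / k ! := by
    intro k
    rw [norm_smul]
    have : ‖((k ! : ℝ))⁻¹‖ = ((k ! : ℝ))⁻¹ := by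
      rw [norm_inv]; norm_num
    rw [this, div_eq_inv_mul]
    have h2 : (0:ℝ) ≤ ((k ! : ℝ))⁻¹ := by positivity
    exact mul_le_mul_of_nonneg_left (mynorm_pow X k) h2
  have hnorm : Summable (fun k => ‖((k ! : ℝ))⁻¹ • X ^ k‖) :=
    Summable.of_nonneg_of_le (fun k => norm_nonneg _) hbound
      (Real.summable_pow_div_factorial r)
  have hsum : Summable (fun k => ((k ! : ℝ))⁻¹ • X ^ k) := hnorm.of_norm
  have hrepr : NormedSpace.exp X = ∑' k, ((k ! : ℝ))⁻¹ • X ^ k := by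
    rw [NormedSpace.exp_eq_tsum ℂ]
    exact tsum_congr fun k => (hc k).symm
  have key : NormedSpace.exp X - ∑ k ∈ Finset.range m, ((k ! : ℝ))⁻¹ • X ^ k
      = ∑' k, (((k + m)! : ℝ))⁻¹ • X ^ (k + m) := by
    rw [hrepr, ← Summable.sum_add_tsum_nat_add m hsum]
    abel
  rw [key]
  have hshift : Summable (fun k => ‖(((k + m)! : ℝ))⁻¹ • X ^ (k + m)‖) := by
    exact (summable_nat_add_iff m).2 hnorm
  calc ‖∑' k, (((k + m)! : ℝ))⁻¹ • X ^ (k + m)‖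
      ≤ ∑' k, ‖(((k + m)! : ℝ))⁻¹ • X ^ (k + m)‖ := norm_tsum_le_tsum_norm hshift
    _ ≤ ∑' k, r ^ m * (r ^ k / k !) := by
        refine Summable.tsum_le_tsum (fun k => ?_) hshift ?_
        · calc ‖(((k + m)! : ℝ))⁻¹ • X ^ (k + m)‖ ≤ r ^ (k + m) / (k + m)! := hbound _
            _ ≤ r ^ m * (r ^ k / k !) := by
              rw [pow_add]
              rw [div_le_iff₀ (by positivity)]
              have h1 : (k ! : ℝ) ≤ ((k+m)! : ℝ) := by
                exact_mod_cast Nat.factorial_le (Nat.le_add_right k m)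
              calc r ^ k * r ^ m = r ^ m * r ^ k := by ring
                _ = r ^ m * (r ^ k / k !) * k ! := by field_simp
                _ ≤ r ^ m * (r ^ k / k !) * (k+m)! := by gcongr
        · exact (Real.summable_pow_div_factorial r).mul_left _
    _ = r ^ m * Real.exp r := by
        rw [tsum_mul_left]
        congr 1
        rw [Real.exp_eq_exp_ℝ]
        rw [NormedSpace.exp_eq_tsum_div]

lemma mul_isBigO {l : Filter ℝ} {f g : ℝ → Mat} {p q : ℝ → ℝ}
    (hf : f =O[l] p) (hg : g =O[l] q) :
    (fun t => f t * g t) =O[l] fun t => p t * q t := by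
  rcases hf.exists_nonneg with ⟨c1, hc1, h1⟩
  rcases hg.exists_nonneg with ⟨c2, hc2, h2⟩
  rw [isBigO_iff]
  refine ⟨n * c1 * c2, ?_⟩
  filter_upwards [h1.bound, h2.bound] with t ht1 ht2
  calc ‖f t * g t‖ ≤ n * ‖f t‖ * ‖g t‖ := mynorm_mul _ _
    _ ≤ n * (c1 * ‖p t‖) * (c2 * ‖q t‖) := by
        have hn : (0:ℝ) ≤ n := by positivity
        have := norm_nonneg (f t)
        gcongr
    _ = n * c1 * c2 * ‖p t * q t‖ := by rw [norm_mul]; ring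

lemma eventually_abs_le_one : ∀ᶠ τ : ℝ in 𝓝 0, |τ| ≤ 1 := by
  have h := Metric.ball_mem_nhds (0:ℝ) one_pos
  filter_upwards [h] with τ hτ
  rw [Metric.mem_ball, Real.dist_eq, sub_zero] at hτ
  exact hτ.le

lemma mono_isBigO {d : ℕ} (hd : 5 ≤ d) (M : Mat) :
    (fun τ : ℝ => τ ^ d • M) =O[𝓝 0] fun τ => τ ^ 5 := by
  rw [isBigO_iff]
  refine ⟨‖M‖, ?_⟩
  filter_upwards [eventually_abs_le_one] with τ hτ
  rw [norm_smul, Real.norm_eq_abs, Real.norm_eq_abs, abs_pow, abs_pow]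
  calc |τ| ^ d * ‖M‖ ≤ |τ| ^ 5 * ‖M‖ := by
        have := pow_le_pow_of_le_one (abs_nonneg τ) hτ hd
        gcongr
    _ = ‖M‖ * |τ| ^ 5 := by ring

lemma pow_isBigO {d : ℕ} (hd : 5 ≤ d) :
    (fun τ : ℝ => τ ^ d) =O[𝓝 0] fun τ : ℝ => τ ^ 5 := by
  rw [isBigO_iff]
  refine ⟨1, ?_⟩
  filter_upwards [eventually_abs_le_one] with τ hτ
  rw [Real.norm_eq_abs, Real.norm_eq_abs, abs_pow, abs_pow, one_mul]
  exact pow_le_pow_of_le_one (abs_nonneg τ) hτ hd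

lemma exp_mid (A : Mat) :
    (fun τ : ℝ => NormedSpace.exp (τ • A)
        - ∑ k ∈ Finset.range 5, ((k ! : ℝ))⁻¹ • (τ • A) ^ k) =O[𝓝 0] fun τ => τ ^ 5 := by
  rw [isBigO_iff]
  refine ⟨(n * ‖A‖) ^ 5 * Real.exp (n * ‖A‖), ?_⟩
  filter_upwards [eventually_abs_le_one] with τ hτ
  have hA0 := norm_nonneg A
  have hn0 : (0:ℝ) ≤ n := by positivity
  have hsm : ‖τ • A‖ = |τ| * ‖A‖ := by rw [norm_smul, Real.norm_eq_abs]
  have harg : (n:ℝ) * ‖τ • A‖ ≤ n * ‖A‖ := by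
    rw [hsm]
    have : |τ| * ‖A‖ ≤ ‖A‖ := by nlinarith
    nlinarith
  calc ‖NormedSpace.exp (τ • A) - ∑ k ∈ Finset.range 5, ((k ! : ℝ))⁻¹ • (τ • A) ^ k‖
      ≤ (n * ‖τ • A‖) ^ 5 * Real.exp (n * ‖τ • A‖) := exp_tail _ 5
    _ ≤ (n * ‖τ • A‖) ^ 5 * Real.exp (n * ‖A‖) :=
        mul_le_mul_of_nonneg_left (Real.exp_le_exp.mpr harg) (by positivity)
    _ = |τ| ^ 5 * ((n * ‖A‖) ^ 5 * Real.exp (n * ‖A‖)) := by rw [hsm]; ring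
    _ = (n * ‖A‖) ^ 5 * Real.exp (n * ‖A‖) * ‖τ ^ 5‖ := by
        rw [Real.norm_eq_abs, abs_pow]; ring

lemma exp_outer (B' C' : Mat) :
    (fun τ : ℝ => NormedSpace.exp ((τ^2/12 : ℝ) • B' + (τ^3/48 : ℝ) • C')
        - ∑ k ∈ Finset.range 3, ((k ! : ℝ))⁻¹ • ((τ^2/12 : ℝ) • B' + (τ^3/48 : ℝ) • C') ^ k)
      =O[𝓝 0] fun τ => τ ^ 5 := by
  set K : ℝ := ‖B'‖ + ‖C'‖ with hK
  have hK0 : 0 ≤ K := by positivity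
  rw [isBigO_iff]
  refine ⟨(n * K) ^ 3 * Real.exp (n * K), ?_⟩
  filter_upwards [eventually_abs_le_one] with τ hτ
  have hn0 : (0:ℝ) ≤ n := by positivity
  have habs3 : |τ| ^ 3 ≤ τ ^ 2 := by
    rw [← sq_abs τ]
    exact pow_le_pow_of_le_one (abs_nonneg τ) hτ (by norm_num)
  have hτ2 : τ ^ 2 ≤ 1 := by
    rw [← sq_abs τ]
    calc |τ| ^ 2 ≤ 1 ^ 2 := pow_le_pow_left₀ (abs_nonneg τ) hτ 2
      _ = 1 := one_pow 2
  have hY : ‖(τ^2/12 : ℝ) • B' + (τ^3/48 : ℝ) • C'‖ ≤ τ ^ 2 * K := by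
    have h2 : |τ^2/12| ≤ τ^2 := by
      rw [abs_of_nonneg (by positivity : (0:ℝ) ≤ τ^2/12)]
      nlinarith [sq_nonneg τ]
    have h3 : |τ^3/48| ≤ τ^2 := by
      have : |τ^3/48| = |τ|^3/48 := by rw [abs_div, abs_pow]; norm_num
      rw [this]
      nlinarith [abs_nonneg τ, pow_nonneg (abs_nonneg τ) 3]
    calc ‖(τ^2/12 : ℝ) • B' + (τ^3/48 : ℝ) • C'‖
        ≤ ‖(τ^2/12 : ℝ) • B'‖ + ‖(τ^3/48 : ℝ) • C'‖ := norm_add_le _ _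
      _ = |τ^2/12| * ‖B'‖ + |τ^3/48| * ‖C'‖ := by
          rw [norm_smul, norm_smul, Real.norm_eq_abs, Real.norm_eq_abs]
      _ ≤ τ^2 * ‖B'‖ + τ^2 * ‖C'‖ := by gcongr
      _ = τ^2 * K := by rw [hK]; ring
  have hYK : ‖(τ^2/12 : ℝ) • B' + (τ^3/48 : ℝ) • C'‖ ≤ K := by
    refine hY.trans ?_
    nlinarith [sq_nonneg τ]
  calc ‖NormedSpace.exp ((τ^2/12 : ℝ) • B' + (τ^3/48 : ℝ) • C')
        - ∑ k ∈ Finset.range 3, ((k ! : ℝ))⁻¹ • ((τ^2/12 : ℝ) • B' + (τ^3/48 : ℝ) • C') ^ k‖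
      ≤ (n * ‖(τ^2/12 : ℝ) • B' + (τ^3/48 : ℝ) • C'‖) ^ 3
          * Real.exp (n * ‖(τ^2/12 : ℝ) • B' + (τ^3/48 : ℝ) • C'‖) := exp_tail _ 3
    _ ≤ (n * (τ^2 * K)) ^ 3 * Real.exp (n * K) := by
        refine mul_le_mul ?_ (Real.exp_le_exp.mpr ?_) (by positivity) (by positivity)
        · gcongr
        · exact mul_le_mul_of_nonneg_left hYK hn0
    _ = (τ^2)^3 * ((n*K)^3 * Real.exp (n*K)) := by ring
    _ ≤ |τ|^5 * ((n*K)^3 * Real.exp (n*K)) := by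
        have h6 : (τ^2)^3 ≤ |τ|^5 := by
          have he : (τ^2)^3 = |τ|^6 := by rw [← sq_abs τ]; ring
          rw [he]
          exact pow_le_pow_of_le_one (abs_nonneg τ) hτ (by norm_num)
        have hpos : (0:ℝ) ≤ (n*K)^3 * Real.exp (n*K) := by positivity
        exact mul_le_mul_of_nonneg_right h6 hpos
    _ = (n * K) ^ 3 * Real.exp (n * K) * ‖τ ^ 5‖ := by
        rw [Real.norm_eq_abs, abs_pow]; ring
lemma key1 (B' C' : Mat) (τ : ℝ) :
    ∑ k ∈ Finset.range 3, ((k ! : ℝ))⁻¹ • ((τ^2/12 : ℝ) • B' + (τ^3/48 : ℝ) • C') ^ k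
    = (1 + (τ^2/12 : ℝ) • B' + (τ^3/48 : ℝ) • C' + (τ^4/288 : ℝ) • (B' * B'))
      + (τ^5 : ℝ) • (((1 : ℝ)/1152) • (B' * C' + C' * B'))
      + (τ^6 : ℝ) • (((1 : ℝ)/4608) • (C' * C')) := by
  simp only [Finset.sum_range_succ, Finset.sum_range_zero, Nat.factorial, zero_add]
  norm_num
  simp only [pow_succ, pow_zero, one_mul, add_mul, mul_add, smul_mul_assoc, mul_smul_comm,
    smul_smul, smul_add, mul_one, mul_assoc]
  module

lemma keyMain (A B C : Mat) (τ : ℝ) :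
    (1 + (τ^2/12 : ℝ) • B + (τ^3/48 : ℝ) • C + (τ^4/288 : ℝ) • (B * B))
      * (∑ k ∈ Finset.range 5, ((k ! : ℝ))⁻¹ • (τ • A) ^ k)
      * (1 + (τ^2/12 : ℝ) • (-B) + (τ^3/48 : ℝ) • C + (τ^4/288 : ℝ) • ((-B) * (-B)))
    = (1 + τ • A + (τ ^ 2 / 2 : ℝ) • A ^ 2
        + τ ^ 3 • ((6 : ℝ)⁻¹ • A ^ 3 + (24 : ℝ)⁻¹ • C + (12 : ℝ)⁻¹ • (B * A - A * B))
        + τ ^ 4 • ((24 : ℝ)⁻¹ • A ^ 4 + (48 : ℝ)⁻¹ • (A * C + C * A)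
          + (24 : ℝ)⁻¹ • (B * A ^ 2 - A ^ 2 * B)))
      + ((τ ^ 5 : ℝ) • (((-1 : ℝ)/72) • (A * (A * (A * (B)))) + ((1 : ℝ)/96) • (A * (A * (C))) + ((1 : ℝ)/288) • (A * (B * (B))) + ((1 : ℝ)/72) • (B * (A * (A * (A)))) + ((-1 : ℝ)/144) • (B * (A * (B))) + ((1 : ℝ)/288) • (B * (B * (A))) + ((1 : ℝ)/576) • (B * (C)) + ((1 : ℝ)/96) • (C * (A * (A))) + ((-1 : ℝ)/576) • (C * (B)))
      + (τ ^ 6 : ℝ) • (((-1 : ℝ)/288) • (A * (A * (A * (A * (B))))) + ((1 : ℝ)/288) • (A * (A * (A * (C)))) + ((1 : ℝ)/576) • (A * (A * (B * (B)))) + ((1 : ℝ)/288) • (B * (A * (A * (A * (A))))) + ((-1 : ℝ)/288) • (B * (A * (A * (B)))) + ((1 : ℝ)/576) • (B * (A * (C))) + ((1 : ℝ)/576) • (B * (B * (A * (A)))) + ((1 : ℝ)/288) • (C * (A * (A * (A)))) + ((-1 : ℝ)/576) • (C * (A * (B))) + ((1 : ℝ)/2304) • (C * (C)))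
      + (τ ^ 7 : ℝ) • (((1 : ℝ)/1152) • (A * (A * (A * (A * (C))))) + ((1 : ℝ)/1728) • (A * (A * (A * (B * (B))))) + ((-1 : ℝ)/864) • (B * (A * (A * (A * (B))))) + ((1 : ℝ)/1152) • (B * (A * (A * (C)))) + ((1 : ℝ)/3456) • (B * (A * (B * (B)))) + ((1 : ℝ)/1728) • (B * (B * (A * (A * (A))))) + ((-1 : ℝ)/3456) • (B * (B * (A * (B)))) + ((1 : ℝ)/13824) • (B * (B * (C))) + ((1 : ℝ)/1152) • (C * (A * (A * (A * (A))))) + ((-1 : ℝ)/1152) • (C * (A * (A * (B)))) + ((1 : ℝ)/2304) • (C * (A * (C))) + ((1 : ℝ)/13824) • (C * (B * (B))))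
      + (τ ^ 8 : ℝ) • (((1 : ℝ)/6912) • (A * (A * (A * (A * (B * (B)))))) + ((-1 : ℝ)/3456) • (B * (A * (A * (A * (A * (B)))))) + ((1 : ℝ)/3456) • (B * (A * (A * (A * (C))))) + ((1 : ℝ)/6912) • (B * (A * (A * (B * (B))))) + ((1 : ℝ)/6912) • (B * (B * (A * (A * (A * (A)))))) + ((-1 : ℝ)/6912) • (B * (B * (A * (A * (B))))) + ((1 : ℝ)/13824) • (B * (B * (A * (C)))) + ((1 : ℝ)/82944) • (B * (B * (B * (B)))) + ((-1 : ℝ)/3456) • (C * (A * (A * (A * (B))))) + ((1 : ℝ)/4608) • (C * (A * (A * (C)))) + ((1 : ℝ)/13824) • (C * (A * (B * (B)))))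
      + (τ ^ 9 : ℝ) • (((1 : ℝ)/13824) • (B * (A * (A * (A * (A * (C)))))) + ((1 : ℝ)/20736) • (B * (A * (A * (A * (B * (B)))))) + ((-1 : ℝ)/20736) • (B * (B * (A * (A * (A * (B)))))) + ((1 : ℝ)/27648) • (B * (B * (A * (A * (C))))) + ((1 : ℝ)/82944) • (B * (B * (A * (B * (B))))) + ((-1 : ℝ)/13824) • (C * (A * (A * (A * (A * (B)))))) + ((1 : ℝ)/13824) • (C * (A * (A * (A * (C))))) + ((1 : ℝ)/27648) • (C * (A * (A * (B * (B))))))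
      + (τ ^ 10 : ℝ) • (((1 : ℝ)/82944) • (B * (A * (A * (A * (A * (B * (B))))))) + ((-1 : ℝ)/82944) • (B * (B * (A * (A * (A * (A * (B))))))) + ((1 : ℝ)/82944) • (B * (B * (A * (A * (A * (C)))))) + ((1 : ℝ)/165888) • (B * (B * (A * (A * (B * (B)))))) + ((1 : ℝ)/55296) • (C * (A * (A * (A * (A * (C)))))) + ((1 : ℝ)/82944) • (C * (A * (A * (A * (B * (B)))))))
      + (τ ^ 11 : ℝ) • (((1 : ℝ)/331776) • (B * (B * (A * (A * (A * (A * (C))))))) + ((1 : ℝ)/497664) • (B * (B * (A * (A * (A * (B * (B))))))) + ((1 : ℝ)/331776) • (C * (A * (A * (A * (A * (B * (B))))))))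
      + (τ ^ 12 : ℝ) • (((1 : ℝ)/1990656) • (B * (B * (A * (A * (A * (A * (B * (B)))))))))) := by
  simp only [Finset.sum_range_succ, Finset.sum_range_zero, Nat.factorial, zero_add, smul_pow]
  norm_num
  simp only [pow_succ, pow_zero, one_mul, add_mul, mul_add, smul_mul_assoc, mul_smul_comm,
    smul_smul, smul_add, smul_sub, smul_neg, neg_mul, mul_neg, sub_eq_add_neg, neg_add,
    neg_neg, mul_one, mul_assoc]
  module

lemma telescope {R : Type*} [Ring R] (e1 e2 e3 p1 p2 p3 t : R) :
    e1 * e2 * e3 - t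
      = (e1 - p1) * (e2 * e3) + p1 * ((e2 - p2) * e3) + (p1 * p2) * (e3 - p3)
        + (p1 * p2 * p3 - t) := by
  noncomm_ring

lemma pow5_isBigO_one : (fun τ : ℝ => τ ^ 5) =O[𝓝 0] (1 : ℝ → ℝ) := by
  have h : Filter.Tendsto (fun τ : ℝ => τ ^ 5) (𝓝 0) (𝓝 ((0:ℝ) ^ 5)) :=
    (continuous_pow 5).tendsto 0
  rw [show ((0:ℝ) ^ 5) = 0 by norm_num] at h
  exact h.isBigO_one ℝ

lemma cont_P2 (A : Mat) : Continuous (fun τ : ℝ => ∑ k ∈ Finset.range 5, ((k ! : ℝ))⁻¹ • (τ • A) ^ k) := by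
  refine continuous_finset_sum _ fun k _ => ?_
  exact (((continuous_id : Continuous (id : ℝ → ℝ)).smul (continuous_const (y := A))).pow k).const_smul ((k ! : ℝ))⁻¹

lemma cont_P1t (B C : Mat) :
    Continuous (fun τ : ℝ => 1 + (τ^2/12 : ℝ) • B + (τ^3/48 : ℝ) • C + (τ^4/288 : ℝ) • (B * B)) := by
  have h1 : Continuous (fun τ : ℝ => (τ^2/12 : ℝ) • B) :=
    ((continuous_pow 2).div_const 12).smul continuous_const
  have h2 : Continuous (fun τ : ℝ => (τ^3/48 : ℝ) • C) :=
    ((continuous_pow 3).div_const 48).smul continuous_const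
  have h3 : Continuous (fun τ : ℝ => (τ^4/288 : ℝ) • (B * B)) :=
    ((continuous_pow 4).div_const 288).smul continuous_const
  exact ((continuous_const.add h1).add h2).add h3

lemma outer_trunc_isBigO (B' C' : Mat) :
    (fun τ : ℝ => NormedSpace.exp ((τ^2/12 : ℝ) • B' + (τ^3/48 : ℝ) • C')
        - (1 + (τ^2/12 : ℝ) • B' + (τ^3/48 : ℝ) • C' + (τ^4/288 : ℝ) • (B' * B')))
      =O[𝓝 0] fun τ => τ ^ 5 := by
  have hre : ∀ τ : ℝ,
      NormedSpace.exp ((τ^2/12 : ℝ) • B' + (τ^3/48 : ℝ) • C')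
        - (1 + (τ^2/12 : ℝ) • B' + (τ^3/48 : ℝ) • C' + (τ^4/288 : ℝ) • (B' * B'))
      = (NormedSpace.exp ((τ^2/12 : ℝ) • B' + (τ^3/48 : ℝ) • C')
          - ∑ k ∈ Finset.range 3, ((k ! : ℝ))⁻¹ • ((τ^2/12 : ℝ) • B' + (τ^3/48 : ℝ) • C') ^ k)
        + ((τ^5 : ℝ) • (((1 : ℝ)/1152) • (B' * C' + C' * B'))
            + (τ^6 : ℝ) • (((1 : ℝ)/4608) • (C' * C'))) := by
    intro τ
    rw [key1 B' C' τ]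
    abel
  have h := (exp_outer B' C').add ((mono_isBigO (le_refl 5) (((1 : ℝ)/1152) • (B' * C' + C' * B'))).add
    (mono_isBigO (by norm_num : 5 ≤ 6) (((1 : ℝ)/4608) • (C' * C'))))
  calc (fun τ : ℝ => NormedSpace.exp ((τ^2/12 : ℝ) • B' + (τ^3/48 : ℝ) • C')
        - (1 + (τ^2/12 : ℝ) • B' + (τ^3/48 : ℝ) • C' + (τ^4/288 : ℝ) • (B' * B')))
      = _ := funext hre
    _ =O[𝓝 0] fun τ => τ ^ 5 := h

/-- the triple-exponential scheme TES4 agrees with the symmetric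
fourth-order transition operator through order `τ⁴`. -/
theorem TES4_expansion
    {n : ℕ} (A B C : Matrix (Fin n) (Fin n) ℂ) :
    (fun τ : ℝ =>
        (NormedSpace.exp ((τ ^ 2 / 12 : ℝ) • B + (τ ^ 3 / 48 : ℝ) • C)
          * NormedSpace.exp (τ • A)
          * NormedSpace.exp (-((τ ^ 2 / 12 : ℝ) • B) + (τ ^ 3 / 48 : ℝ) • C)) -
          (1 + τ • A + (τ ^ 2 / 2 : ℝ) • A ^ 2
            + τ ^ 3 • ((6 : ℝ)⁻¹ • A ^ 3 + (24 : ℝ)⁻¹ • C + (12 : ℝ)⁻¹ • (B * A - A * B))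
            + τ ^ 4 • ((24 : ℝ)⁻¹ • A ^ 4 + (48 : ℝ)⁻¹ • (A * C + C * A)
              + (24 : ℝ)⁻¹ • (B * A ^ 2 - A ^ 2 * B))))
      =O[𝓝 0] fun τ => τ ^ 5 := by
  simp only [← smul_neg]
  have hE1t := outer_trunc_isBigO B C
  have hE3t := outer_trunc_isBigO (-B) C
  have h2 := exp_mid A
  have hP1 : (fun τ : ℝ => (1 + (τ^2/12 : ℝ) • B + (τ^3/48 : ℝ) • C + (τ^4/288 : ℝ) • (B * B))) =O[𝓝 0] (1 : ℝ → ℝ) :=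
    ((cont_P1t B C).tendsto 0).isBigO_one ℝ
  have hP3 : (fun τ : ℝ => (1 + (τ^2/12 : ℝ) • (-B) + (τ^3/48 : ℝ) • C + (τ^4/288 : ℝ) • ((-B) * (-B)))) =O[𝓝 0] (1 : ℝ → ℝ) :=
    ((cont_P1t (-B) C).tendsto 0).isBigO_one ℝ
  have hP2 : (fun τ : ℝ => (∑ k ∈ Finset.range 5, ((k ! : ℝ))⁻¹ • (τ • A) ^ k)) =O[𝓝 0] (1 : ℝ → ℝ) :=
    ((cont_P2 A).tendsto 0).isBigO_one ℝ
  have hE2O1 : (fun τ : ℝ => NormedSpace.exp (τ • A)) =O[𝓝 0] (1 : ℝ → ℝ) := by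
    have hfe : (fun τ : ℝ => NormedSpace.exp (τ • A))
        = fun τ : ℝ => (NormedSpace.exp (τ • A) - (∑ k ∈ Finset.range 5, ((k ! : ℝ))⁻¹ • (τ • A) ^ k)) + (∑ k ∈ Finset.range 5, ((k ! : ℝ))⁻¹ • (τ • A) ^ k) := by
      funext τ; abel
    rw [hfe]
    exact (h2.trans pow5_isBigO_one).add hP2
  have hE3O1 : (fun τ : ℝ => NormedSpace.exp ((τ ^ 2 / 12 : ℝ) • -B + (τ ^ 3 / 48 : ℝ) • C)) =O[𝓝 0] (1 : ℝ → ℝ) := by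
    have hfe : (fun τ : ℝ => NormedSpace.exp ((τ ^ 2 / 12 : ℝ) • -B + (τ ^ 3 / 48 : ℝ) • C))
        = fun τ : ℝ => (NormedSpace.exp ((τ ^ 2 / 12 : ℝ) • -B + (τ ^ 3 / 48 : ℝ) • C) - (1 + (τ^2/12 : ℝ) • (-B) + (τ^3/48 : ℝ) • C + (τ^4/288 : ℝ) • ((-B) * (-B)))) + (1 + (τ^2/12 : ℝ) • (-B) + (τ^3/48 : ℝ) • C + (τ^4/288 : ℝ) • ((-B) * (-B))) := by
      funext τ; abel
    rw [hfe]
    exact (hE3t.trans pow5_isBigO_one).add hP3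
  have hA1 : (fun τ : ℝ => (NormedSpace.exp ((τ ^ 2 / 12 : ℝ) • B + (τ ^ 3 / 48 : ℝ) • C) - (1 + (τ^2/12 : ℝ) • B + (τ^3/48 : ℝ) • C + (τ^4/288 : ℝ) • (B * B))) * (NormedSpace.exp (τ • A) * NormedSpace.exp ((τ ^ 2 / 12 : ℝ) • -B + (τ ^ 3 / 48 : ℝ) • C))) =O[𝓝 0] fun τ => τ ^ 5 := by
    have := mul_isBigO hE1t (mul_isBigO hE2O1 hE3O1)
    simpa using this
  have hA2 : (fun τ : ℝ => (1 + (τ^2/12 : ℝ) • B + (τ^3/48 : ℝ) • C + (τ^4/288 : ℝ) • (B * B)) * ((NormedSpace.exp (τ • A) - (∑ k ∈ Finset.range 5, ((k ! : ℝ))⁻¹ • (τ • A) ^ k)) * NormedSpace.exp ((τ ^ 2 / 12 : ℝ) • -B + (τ ^ 3 / 48 : ℝ) • C))) =O[𝓝 0] fun τ => τ ^ 5 := by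
    have := mul_isBigO hP1 (mul_isBigO h2 hE3O1)
    simpa using this
  have hA3 : (fun τ : ℝ => ((1 + (τ^2/12 : ℝ) • B + (τ^3/48 : ℝ) • C + (τ^4/288 : ℝ) • (B * B)) * (∑ k ∈ Finset.range 5, ((k ! : ℝ))⁻¹ • (τ • A) ^ k)) * (NormedSpace.exp ((τ ^ 2 / 12 : ℝ) • -B + (τ ^ 3 / 48 : ℝ) • C) - (1 + (τ^2/12 : ℝ) • (-B) + (τ^3/48 : ℝ) • C + (τ^4/288 : ℝ) • ((-B) * (-B))))) =O[𝓝 0] fun τ => τ ^ 5 := by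
    have := mul_isBigO (mul_isBigO hP1 hP2) hE3t
    simpa using this
  have hA4 : (fun τ : ℝ => (1 + (τ^2/12 : ℝ) • B + (τ^3/48 : ℝ) • C + (τ^4/288 : ℝ) • (B * B)) * (∑ k ∈ Finset.range 5, ((k ! : ℝ))⁻¹ • (τ • A) ^ k) * (1 + (τ^2/12 : ℝ) • (-B) + (τ^3/48 : ℝ) • C + (τ^4/288 : ℝ) • ((-B) * (-B))) - (1 + τ • A + (τ ^ 2 / 2 : ℝ) • A ^ 2
            + τ ^ 3 • ((6 : ℝ)⁻¹ • A ^ 3 + (24 : ℝ)⁻¹ • C + (12 : ℝ)⁻¹ • (B * A - A * B))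
            + τ ^ 4 • ((24 : ℝ)⁻¹ • A ^ 4 + (48 : ℝ)⁻¹ • (A * C + C * A)
              + (24 : ℝ)⁻¹ • (B * A ^ 2 - A ^ 2 * B)))) =O[𝓝 0] fun τ => τ ^ 5 := by
    have hre : ∀ τ : ℝ, (1 + (τ^2/12 : ℝ) • B + (τ^3/48 : ℝ) • C + (τ^4/288 : ℝ) • (B * B)) * (∑ k ∈ Finset.range 5, ((k ! : ℝ))⁻¹ • (τ • A) ^ k) * (1 + (τ^2/12 : ℝ) • (-B) + (τ^3/48 : ℝ) • C + (τ^4/288 : ℝ) • ((-B) * (-B))) - (1 + τ • A + (τ ^ 2 / 2 : ℝ) • A ^ 2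
            + τ ^ 3 • ((6 : ℝ)⁻¹ • A ^ 3 + (24 : ℝ)⁻¹ • C + (12 : ℝ)⁻¹ • (B * A - A * B))
            + τ ^ 4 • ((24 : ℝ)⁻¹ • A ^ 4 + (48 : ℝ)⁻¹ • (A * C + C * A)
              + (24 : ℝ)⁻¹ • (B * A ^ 2 - A ^ 2 * B)))
        = ((τ ^ 5 : ℝ) • (((-1 : ℝ)/72) • (A * (A * (A * (B)))) + ((1 : ℝ)/96) • (A * (A * (C))) + ((1 : ℝ)/288) • (A * (B * (B))) + ((1 : ℝ)/72) • (B * (A * (A * (A)))) + ((-1 : ℝ)/144) • (B * (A * (B))) + ((1 : ℝ)/288) • (B * (B * (A))) + ((1 : ℝ)/576) • (B * (C)) + ((1 : ℝ)/96) • (C * (A * (A))) + ((-1 : ℝ)/576) • (C * (B)))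
      + (τ ^ 6 : ℝ) • (((-1 : ℝ)/288) • (A * (A * (A * (A * (B))))) + ((1 : ℝ)/288) • (A * (A * (A * (C)))) + ((1 : ℝ)/576) • (A * (A * (B * (B)))) + ((1 : ℝ)/288) • (B * (A * (A * (A * (A))))) + ((-1 : ℝ)/288) • (B * (A * (A * (B)))) + ((1 : ℝ)/576) • (B * (A * (C))) + ((1 : ℝ)/576) • (B * (B * (A * (A)))) + ((1 : ℝ)/288) • (C * (A * (A * (A)))) + ((-1 : ℝ)/576) • (C * (A * (B))) + ((1 : ℝ)/2304) • (C * (C)))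
      + (τ ^ 7 : ℝ) • (((1 : ℝ)/1152) • (A * (A * (A * (A * (C))))) + ((1 : ℝ)/1728) • (A * (A * (A * (B * (B))))) + ((-1 : ℝ)/864) • (B * (A * (A * (A * (B))))) + ((1 : ℝ)/1152) • (B * (A * (A * (C)))) + ((1 : ℝ)/3456) • (B * (A * (B * (B)))) + ((1 : ℝ)/1728) • (B * (B * (A * (A * (A))))) + ((-1 : ℝ)/3456) • (B * (B * (A * (B)))) + ((1 : ℝ)/13824) • (B * (B * (C))) + ((1 : ℝ)/1152) • (C * (A * (A * (A * (A))))) + ((-1 : ℝ)/1152) • (C * (A * (A * (B)))) + ((1 : ℝ)/2304) • (C * (A * (C))) + ((1 : ℝ)/13824) • (C * (B * (B))))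
      + (τ ^ 8 : ℝ) • (((1 : ℝ)/6912) • (A * (A * (A * (A * (B * (B)))))) + ((-1 : ℝ)/3456) • (B * (A * (A * (A * (A * (B)))))) + ((1 : ℝ)/3456) • (B * (A * (A * (A * (C))))) + ((1 : ℝ)/6912) • (B * (A * (A * (B * (B))))) + ((1 : ℝ)/6912) • (B * (B * (A * (A * (A * (A)))))) + ((-1 : ℝ)/6912) • (B * (B * (A * (A * (B))))) + ((1 : ℝ)/13824) • (B * (B * (A * (C)))) + ((1 : ℝ)/82944) • (B * (B * (B * (B)))) + ((-1 : ℝ)/3456) • (C * (A * (A * (A * (B))))) + ((1 : ℝ)/4608) • (C * (A * (A * (C)))) + ((1 : ℝ)/13824) • (C * (A * (B * (B)))))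
      + (τ ^ 9 : ℝ) • (((1 : ℝ)/13824) • (B * (A * (A * (A * (A * (C)))))) + ((1 : ℝ)/20736) • (B * (A * (A * (A * (B * (B)))))) + ((-1 : ℝ)/20736) • (B * (B * (A * (A * (A * (B)))))) + ((1 : ℝ)/27648) • (B * (B * (A * (A * (C))))) + ((1 : ℝ)/82944) • (B * (B * (A * (B * (B))))) + ((-1 : ℝ)/13824) • (C * (A * (A * (A * (A * (B)))))) + ((1 : ℝ)/13824) • (C * (A * (A * (A * (C))))) + ((1 : ℝ)/27648) • (C * (A * (A * (B * (B))))))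
      + (τ ^ 10 : ℝ) • (((1 : ℝ)/82944) • (B * (A * (A * (A * (A * (B * (B))))))) + ((-1 : ℝ)/82944) • (B * (B * (A * (A * (A * (A * (B))))))) + ((1 : ℝ)/82944) • (B * (B * (A * (A * (A * (C)))))) + ((1 : ℝ)/165888) • (B * (B * (A * (A * (B * (B)))))) + ((1 : ℝ)/55296) • (C * (A * (A * (A * (A * (C)))))) + ((1 : ℝ)/82944) • (C * (A * (A * (A * (B * (B)))))))
      + (τ ^ 11 : ℝ) • (((1 : ℝ)/331776) • (B * (B * (A * (A * (A * (A * (C))))))) + ((1 : ℝ)/497664) • (B * (B * (A * (A * (A * (B * (B))))))) + ((1 : ℝ)/331776) • (C * (A * (A * (A * (A * (B * (B))))))))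
      + (τ ^ 12 : ℝ) • (((1 : ℝ)/1990656) • (B * (B * (A * (A * (A * (A * (B * (B)))))))))) := by
      intro τ
      rw [keyMain A B C τ]
      abel
    calc (fun τ : ℝ => (1 + (τ^2/12 : ℝ) • B + (τ^3/48 : ℝ) • C + (τ^4/288 : ℝ) • (B * B)) * (∑ k ∈ Finset.range 5, ((k ! : ℝ))⁻¹ • (τ • A) ^ k) * (1 + (τ^2/12 : ℝ) • (-B) + (τ^3/48 : ℝ) • C + (τ^4/288 : ℝ) • ((-B) * (-B))) - (1 + τ • A + (τ ^ 2 / 2 : ℝ) • A ^ 2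
            + τ ^ 3 • ((6 : ℝ)⁻¹ • A ^ 3 + (24 : ℝ)⁻¹ • C + (12 : ℝ)⁻¹ • (B * A - A * B))
            + τ ^ 4 • ((24 : ℝ)⁻¹ • A ^ 4 + (48 : ℝ)⁻¹ • (A * C + C * A)
              + (24 : ℝ)⁻¹ • (B * A ^ 2 - A ^ 2 * B)))) = _ := funext hre
      _ =O[𝓝 0] fun τ => τ ^ 5 := ((((((((mono_isBigO (by norm_num : 5 ≤ 5) ((((-1 : ℝ)/72) • (A * (A * (A * (B)))) + ((1 : ℝ)/96) • (A * (A * (C))) + ((1 : ℝ)/288) • (A * (B * (B))) + ((1 : ℝ)/72) • (B * (A * (A * (A)))) + ((-1 : ℝ)/144) • (B * (A * (B))) + ((1 : ℝ)/288) • (B * (B * (A))) + ((1 : ℝ)/576) • (B * (C)) + ((1 : ℝ)/96) • (C * (A * (A))) + ((-1 : ℝ)/576) • (C * (B))))).add (mono_isBigO (by norm_num : 5 ≤ 6) ((((-1 : ℝ)/288) • (A * (A * (A * (A * (B))))) + ((1 : ℝ)/288) • (A * (A * (A * (C)))) + ((1 : ℝ)/576) • (A * (A * (B * (B)))) + ((1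 : ℝ)/288) • (B * (A * (A * (A * (A))))) + ((-1 : ℝ)/288) • (B * (A * (A * (B)))) + ((1 : ℝ)/576) • (B * (A * (C))) + ((1 : ℝ)/576) • (B * (B * (A * (A)))) + ((1 : ℝ)/288) • (C * (A * (A * (A)))) + ((-1 : ℝ)/576) • (C * (A * (B))) + ((1 : ℝ)/2304) • (C * (C)))))).add (mono_isBigO (by norm_num : 5 ≤ 7) ((((1 : ℝ)/1152) • (A * (A * (A * (A * (C))))) + ((1 : ℝ)/1728) • (A * (A * (A * (B * (B))))) + ((-1 : ℝ)/864) • (B * (A * (A * (A * (B))))) + ((1 : ℝ)/1152) • (B * (A * (A * (C)))) + ((1 : ℝ)/3456) • (B * (A * (B * (B)))) + ((1 : ℝ)/1728) • (B * (B * (A * (A * (A))))) + ((-1 : ℝ)/3456) • (B * (B * (A * (B)))) + ((1 : ℝ)/13824) • (B * (B * (C))) + ((1 : ℝ)/1152) • (C * (A * (A * (A * (A))))) + ((-1 : ℝ)/1152) • (C * (A * (A * (B)))) + ((1 : ℝ)/2304) • (C * (A * (C))) + ((1 : ℝ)/13824) • (C * (B * (B))))))).add (mono_isBigO (by norm_num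 : 5 ≤ 8) ((((1 : ℝ)/6912) • (A * (A * (A * (A * (B * (B)))))) + ((-1 : ℝ)/3456) • (B * (A * (A * (A * (A * (B)))))) + ((1 : ℝ)/3456) • (B * (A * (A * (A * (C))))) + ((1 : ℝ)/6912) • (B * (A * (A * (B * (B))))) + ((1 : ℝ)/6912) • (B * (B * (A * (A * (A * (A)))))) + ((-1 : ℝ)/6912) • (B * (B * (A * (A * (B))))) + ((1 : ℝ)/13824) • (B * (B * (A * (C)))) + ((1 : ℝ)/82944) • (B * (B * (B * (B)))) + ((-1 : ℝ)/3456) • (C * (A * (A * (A * (B))))) + ((1 : ℝ)/4608) • (C * (A * (A * (C)))) + ((1 : ℝ)/13824) • (C * (A * (B * (B)))))))).add (mono_isBigO (by norm_num : 5 ≤ 9) ((((1 : ℝ)/13824) • (B * (A * (A * (A * (A * (C)))))) + ((1 : ℝ)/20736) • (B * (A * (A * (A * (B * (B)))))) + ((-1 : ℝ)/20736) • (B * (B * (A * (A * (A * (B)))))) + ((1 : ℝ)/27648) • (B * (B * (A * (A * (C))))) + ((1 : ℝ)/82944) • (B * (B * (A * (B * (B))))) + ((-1 : ℝ)/13824)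 • (C * (A * (A * (A * (A * (B)))))) + ((1 : ℝ)/13824) • (C * (A * (A * (A * (C))))) + ((1 : ℝ)/27648) • (C * (A * (A * (B * (B))))))))).add (mono_isBigO (by norm_num : 5 ≤ 10) ((((1 : ℝ)/82944) • (B * (A * (A * (A * (A * (B * (B))))))) + ((-1 : ℝ)/82944) • (B * (B * (A * (A * (A * (A * (B))))))) + ((1 : ℝ)/82944) • (B * (B * (A * (A * (A * (C)))))) + ((1 : ℝ)/165888) • (B * (B * (A * (A * (B * (B)))))) + ((1 : ℝ)/55296) • (C * (A * (A * (A * (A * (C)))))) + ((1 : ℝ)/82944) • (C * (A * (A * (A * (B * (B)))))))))).add (mono_isBigO (by norm_num : 5 ≤ 11) ((((1 : ℝ)/331776) • (B * (B * (A * (A * (A * (A * (C))))))) + ((1 : ℝ)/497664) • (B * (B * (A * (A * (A * (B * (B))))))) + ((1 : ℝ)/331776) • (C * (A * (A * (A * (A * (B * (B))))))))))).add (mono_isBigO (by norm_num : 5 ≤ 12) ((((1 : ℝ)/1990656) • (B * (B * (A * (A * (A * (A * (B * (B))))))))))))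
  have decomp : (fun τ : ℝ => NormedSpace.exp ((τ ^ 2 / 12 : ℝ) • B + (τ ^ 3 / 48 : ℝ) • C) * NormedSpace.exp (τ • A) * NormedSpace.exp ((τ ^ 2 / 12 : ℝ) • -B + (τ ^ 3 / 48 : ℝ) • C) - (1 + τ • A + (τ ^ 2 / 2 : ℝ) • A ^ 2
            + τ ^ 3 • ((6 : ℝ)⁻¹ • A ^ 3 + (24 : ℝ)⁻¹ • C + (12 : ℝ)⁻¹ • (B * A - A * B))
            + τ ^ 4 • ((24 : ℝ)⁻¹ • A ^ 4 + (48 : ℝ)⁻¹ • (A * C + C * A)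
              + (24 : ℝ)⁻¹ • (B * A ^ 2 - A ^ 2 * B))))
      = fun τ : ℝ => (NormedSpace.exp ((τ ^ 2 / 12 : ℝ) • B + (τ ^ 3 / 48 : ℝ) • C) - (1 + (τ^2/12 : ℝ) • B + (τ^3/48 : ℝ) • C + (τ^4/288 : ℝ) • (B * B))) * (NormedSpace.exp (τ • A) * NormedSpace.exp ((τ ^ 2 / 12 : ℝ) • -B + (τ ^ 3 / 48 : ℝ) • C))
          + (1 + (τ^2/12 : ℝ) • B + (τ^3/48 : ℝ) • C + (τ^4/288 : ℝ) • (B * B)) * ((NormedSpace.exp (τ • A) - (∑ k ∈ Finset.range 5, ((k ! : ℝ))⁻¹ • (τ • A) ^ k)) * NormedSpace.exp ((τ ^ 2 / 12 : ℝ) • -B + (τ ^ 3 / 48 : ℝ) • C))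
          + ((1 + (τ^2/12 : ℝ) • B + (τ^3/48 : ℝ) • C + (τ^4/288 : ℝ) • (B * B)) * (∑ k ∈ Finset.range 5, ((k ! : ℝ))⁻¹ • (τ • A) ^ k)) * (NormedSpace.exp ((τ ^ 2 / 12 : ℝ) • -B + (τ ^ 3 / 48 : ℝ) • C) - (1 + (τ^2/12 : ℝ) • (-B) + (τ^3/48 : ℝ) • C + (τ^4/288 : ℝ) • ((-B) * (-B))))
          + ((1 + (τ^2/12 : ℝ) • B + (τ^3/48 : ℝ) • C + (τ^4/288 : ℝ) • (B * B)) * (∑ k ∈ Finset.range 5, ((k ! : ℝ))⁻¹ • (τ • A) ^ k) * (1 + (τ^2/12 : ℝ) • (-B) + (τ^3/48 : ℝ) • C + (τ^4/288 : ℝ) • ((-B) * (-B))) - (1 + τ • A + (τ ^ 2 / 2 : ℝ) • A ^ 2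
            + τ ^ 3 • ((6 : ℝ)⁻¹ • A ^ 3 + (24 : ℝ)⁻¹ • C + (12 : ℝ)⁻¹ • (B * A - A * B))
            + τ ^ 4 • ((24 : ℝ)⁻¹ • A ^ 4 + (48 : ℝ)⁻¹ • (A * C + C * A)
              + (24 : ℝ)⁻¹ • (B * A ^ 2 - A ^ 2 * B)))) := by
    funext τ
    exact telescope _ _ _ _ _ _ _
  rw [decomp]
  exact ((hA1.add hA2).add hA3).add hA4
end

section
/- Let Q : ℝ → Mₙ(ℂ) be four times continuously differentiable (entrywise). Then the second Magnus term admits the midpoint expansion (1/2)·∫₀ᵗ ∫₀^{t₁} (Q(t₁)·Q(t₂) − Q(t₂)·Q(t₁)) dt₂ dt₁ = (t³/12)·(Q'(t/2)·Q(t/2) − Q(t/2)·Q'(t/2)) + O(t⁵) as t → 0, where the iterated integral is taken entrywise. -/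
open Matrix Filter Asymptotics intervalIntegral
open scoped Topology

attribute [local instance] Matrix.normedAddCommGroup Matrix.normedSpace

attribute [-instance] instTopologicalSpaceMatrix Matrix.instUniformSpace

noncomputable section MagnusAux

variable {E : Type*} [NormedAddCommGroup E] [NormedSpace ℝ E]

/-- MVT step: if `f 0 = 0` and `f' = O(t^n)` near 0 then `f = O(t^(n+1))`. -/
lemma isBigO_step {f f' : ℝ → E} {n : ℕ}
    (hd : ∀ t, HasDerivAt f (f' t) t) (h0 : f 0 = 0)
    (hO : f' =O[𝓝 (0:ℝ)] fun t => t ^ n) :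
    f =O[𝓝 (0:ℝ)] fun t => t ^ (n + 1) := by
  rw [isBigO_iff] at hO ⊢
  obtain ⟨C, hC⟩ := hO
  refine ⟨max C 0, ?_⟩
  have hC0 : (0:ℝ) ≤ max C 0 := le_max_right _ _
  rw [Metric.eventually_nhds_iff] at hC ⊢
  obtain ⟨ε, hε, hball⟩ := hC
  refine ⟨ε, hε, fun t ht => ?_⟩
  have hsub : Set.uIcc (0:ℝ) t ⊆ Metric.ball (0:ℝ) ε := by
    intro s hs
    rw [Set.mem_uIcc] at hs
    simp only [Metric.mem_ball, Real.dist_eq, sub_zero] at ht ⊢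
    rcases hs with ⟨h1, h2⟩ | ⟨h1, h2⟩ <;> [skip; skip] <;>
      · cases abs_cases t <;> cases abs_cases s <;> linarith [ht]
  have key : ‖f t - f 0‖ ≤ (max C 0 * |t| ^ n) * ‖t - 0‖ := by
    apply (convex_uIcc (0:ℝ) t).norm_image_sub_le_of_norm_hasDerivWithin_le
      (fun s _ => (hd s).hasDerivWithinAt) ?_ Set.left_mem_uIcc Set.right_mem_uIcc
    intro s hs
    have hsb := hball (by simpa [Real.dist_eq] using (hsub hs))
    have hst : |s| ≤ |t| := by
      rw [Set.mem_uIcc] at hs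
      rcases hs with ⟨h1, h2⟩ | ⟨h1, h2⟩ <;> cases abs_cases t <;> cases abs_cases s <;> linarith
    calc ‖f' s‖ ≤ C * ‖s ^ n‖ := hsb
      _ ≤ max C 0 * |s| ^ n := by
          rw [norm_pow, Real.norm_eq_abs]
          exact mul_le_mul_of_nonneg_right (le_max_left _ _) (by positivity)
      _ ≤ max C 0 * |t| ^ n :=
          mul_le_mul_of_nonneg_left (pow_le_pow_left₀ (abs_nonneg s) hst n) hC0
  rw [h0, sub_zero] at key
  calc ‖f t‖ ≤ (max C 0 * |t| ^ n) * ‖t - 0‖ := key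
    _ = max C 0 * ‖t ^ (n+1)‖ := by
        rw [sub_zero, norm_pow, Real.norm_eq_abs, pow_succ]; ring

variable {n : ℕ}

local notation "M" => Matrix (Fin n) (Fin n) ℂ

/-- Matrix multiplication as a continuous ℝ-bilinear map. -/
def mulL (n : ℕ) : Matrix (Fin n) (Fin n) ℂ →L[ℝ]
    Matrix (Fin n) (Fin n) ℂ →L[ℝ] Matrix (Fin n) (Fin n) ℂ :=
  LinearMap.toContinuousLinearMap
    { toFun := fun A => LinearMap.toContinuousLinearMap (LinearMap.mulLeft ℝ A)
      map_add' := by intros; ext; simp [Matrix.add_mul]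
      map_smul' := by intros; ext; simp [Matrix.smul_mul] }

@[simp] lemma mulL_apply (A B : M) : mulL n A B = A * B := rfl

lemma HasDerivAt.matmul {u v : ℝ → M} {u' v' : M} {t : ℝ}
    (hu : HasDerivAt u u' t) (hv : HasDerivAt v v' t) :
    HasDerivAt (fun s => u s * v s) (u' * v t + u t * v') t := by
  have h1 : HasDerivAt (fun s => mulL n (u s)) (mulL n u') t :=
    ((mulL n).hasFDerivAt.comp_hasDerivAt t hu)
  simpa using h1.clm_apply hv

lemma Continuous.matmul {u v : ℝ → M} (hu : Continuous u) (hv : Continuous v) :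
    Continuous (fun s => u s * v s) := by
  have : Continuous (fun s => mulL n (u s) (v s)) :=
    ((mulL n).continuous₂).comp (hu.prodMk hv)
  simpa using this

end MagnusAux

/-- midpoint expansion of the second Magnus term
`(1/2)∫₀ᵗ∫₀^{t₁} [Q(t₁),Q(t₂)] dt₂ dt₁ = (t³/12)·[Q'(t/2), Q(t/2)] + O(t⁵)` as `t → 0`. -/
theorem magnus_second_term_midpoint
    {n : ℕ} (Q : ℝ → Matrix (Fin n) (Fin n) ℂ) (hQ : ContDiff ℝ 4 Q) :
    (fun t : ℝ =>
        (2 : ℝ)⁻¹ • (∫ t₁ in (0 : ℝ)..t, ∫ t₂ in (0 : ℝ)..t₁, (Q t₁ * Q t₂ - Q t₂ * Q t₁)) -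
          (t ^ 3 / 12 : ℝ) •
            (iteratedDeriv 1 Q (t / 2) * Q (t / 2) - Q (t / 2) * iteratedDeriv 1 Q (t / 2)))
      =O[𝓝 0] fun t => t ^ 5 := by
  -- derivatives of Q
  have h4 : ContDiff ℝ (3+1) Q := by
    have : ((3:WithTop ℕ∞)+1) = 4 := by norm_num
    rw [this]; exact hQ
  obtain ⟨hQdiff, -, hQc3⟩ := contDiff_succ_iff_deriv.mp h4
  set Q1 := deriv Q with hQ1def
  have h3 : ContDiff ℝ (2+1) Q1 := by
    have : ((2:WithTop ℕ∞)+1) = 3 := by norm_num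
    rw [this]; exact hQc3
  obtain ⟨hQ1diff, -, hQc2⟩ := contDiff_succ_iff_deriv.mp h3
  set Q2 := deriv Q1 with hQ2def
  have h2 : ContDiff ℝ (1+1) Q2 := by
    have : ((1:WithTop ℕ∞)+1) = 2 := by norm_num
    rw [this]; exact hQc2
  obtain ⟨hQ2diff, -, hQc1⟩ := contDiff_succ_iff_deriv.mp h2
  set Q3 := deriv Q2 with hQ3def
  have h1 : ContDiff ℝ (0+1) Q3 := by
    have : ((0:WithTop ℕ∞)+1) = 1 := by norm_num
    rw [this]; exact hQc1
  obtain ⟨hQ3diff, -, hQc0⟩ := contDiff_succ_iff_deriv.mp h1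
  set Q4 := deriv Q3 with hQ4def
  have cQ : Continuous Q := hQ.continuous
  have cQ1 : Continuous Q1 := hQc3.continuous
  have cQ2 : Continuous Q2 := hQc2.continuous
  have cQ3 : Continuous Q3 := hQc1.continuous
  have cQ4 : Continuous Q4 := hQc0.continuous
  have dQ : ∀ t, HasDerivAt Q (Q1 t) t := fun t => (hQdiff t).hasDerivAt
  have dQ1 : ∀ t, HasDerivAt Q1 (Q2 t) t := fun t => (hQ1diff t).hasDerivAt
  have dQ2 : ∀ t, HasDerivAt Q2 (Q3 t) t := fun t => (hQ2diff t).hasDerivAt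
  have dQ3 : ∀ t, HasDerivAt Q3 (Q4 t) t := fun t => (hQ3diff t).hasDerivAt
  -- the primitive J of Q
  set J : ℝ → Matrix (Fin n) (Fin n) ℂ := fun t => ∫ s in (0:ℝ)..t, Q s with hJdef
  have dJ : ∀ t, HasDerivAt J (Q t) t := fun t =>
    intervalIntegral.integral_hasDerivAt_right (cQ.intervalIntegrable 0 t)
      (cQ.stronglyMeasurableAtFilter _ _) cQ.continuousAt
  have cJ : Continuous J := by
    have : Differentiable ℝ J := fun t => (dJ t).differentiableAt
    exact this.continuous
  have hJ0 : J 0 = 0 := intervalIntegral.integral_same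
  set C1 := Q1 0 * Q 0 - Q 0 * Q1 0 with hC1def
  set C2 := Q2 0 * Q 0 - Q 0 * Q2 0 with hC2def
  -- the inner integral collapses
  have hInner : ∀ t₁ : ℝ, (∫ t₂ in (0:ℝ)..t₁, (Q t₁ * Q t₂ - Q t₂ * Q t₁))
      = Q t₁ * J t₁ - J t₁ * Q t₁ := by
    intro t₁
    have int1 : IntervalIntegrable (fun t₂ => Q t₁ * Q t₂) MeasureTheory.volume 0 t₁ :=
      (continuous_const.matmul cQ).intervalIntegrable _ _
    have int2 : IntervalIntegrable (fun t₂ => Q t₂ * Q t₁) MeasureTheory.volume 0 t₁ :=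
      (cQ.matmul continuous_const).intervalIntegrable _ _
    rw [intervalIntegral.integral_sub int1 int2]
    congr 1
    · have hiq : IntervalIntegrable Q MeasureTheory.volume 0 t₁ := cQ.intervalIntegrable 0 t₁
      have := (mulL n (Q t₁)).intervalIntegral_comp_comm hiq
      simpa using this
    · have hiq : IntervalIntegrable Q MeasureTheory.volume 0 t₁ := cQ.intervalIntegrable 0 t₁
      have := ((mulL n).flip (Q t₁)).intervalIntegral_comp_comm hiq
      simpa using this
  -- continuity of the h-chain
  have c_h0 : Continuous (fun t => Q t * J t - J t * Q t) := (cQ.matmul cJ).sub (cJ.matmul cQ)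
  -- FTC for the outer integral
  have dp0 : ∀ t, HasDerivAt (fun u => ∫ s in (0:ℝ)..u, (Q s * J s - J s * Q s))
      ((Q t * J t - J t * Q t)) t := fun t =>
    intervalIntegral.integral_hasDerivAt_right (c_h0.intervalIntegrable 0 t)
      (c_h0.stronglyMeasurableAtFilter _ _) c_h0.continuousAt
  -- derivative chain for h
  have dh0 : ∀ t, HasDerivAt (fun s => Q s * J s - J s * Q s)
      (Q1 t * J t - J t * Q1 t) t := by
    intro t
    have h := ((dQ t).matmul (dJ t)).sub ((dJ t).matmul (dQ t))
    refine h.congr_deriv ?_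
    abel!
  have dh1 : ∀ t, HasDerivAt (fun s => Q1 s * J s - J s * Q1 s)
      ((Q2 t * J t - J t * Q2 t) + (Q1 t * Q t - Q t * Q1 t)) t := by
    intro t
    have h := ((dQ1 t).matmul (dJ t)).sub ((dJ t).matmul (dQ1 t))
    refine h.congr_deriv ?_
    ext i j
    simp
    ring
  have dh2 : ∀ t, HasDerivAt (fun s => (Q2 s * J s - J s * Q2 s) + (Q1 s * Q s - Q s * Q1 s))
      ((Q3 t * J t - J t * Q3 t) + (2:ℝ) • (Q2 t * Q t - Q t * Q2 t)) t := by
    intro t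
    have h := (((dQ2 t).matmul (dJ t)).sub ((dJ t).matmul (dQ2 t))).add
      (((dQ1 t).matmul (dQ t)).sub ((dQ t).matmul (dQ1 t)))
    refine h.congr_deriv ?_
    ext i j
    simp [Matrix.add_apply, Matrix.sub_apply, Matrix.smul_apply]
    ring
  have dh3 : ∀ t, HasDerivAt
      (fun s => (Q3 s * J s - J s * Q3 s) + (2:ℝ) • (Q2 s * Q s - Q s * Q2 s))
      ((Q4 t * J t - J t * Q4 t) + (3:ℝ) • (Q3 t * Q t - Q t * Q3 t)
        + (2:ℝ) • (Q2 t * Q1 t - Q1 t * Q2 t)) t := by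
    intro t
    have h := (((dQ3 t).matmul (dJ t)).sub ((dJ t).matmul (dQ3 t))).add
      (((((dQ2 t).matmul (dQ t)).sub ((dQ t).matmul (dQ2 t)))).const_smul (2:ℝ))
    refine h.congr_deriv ?_
    ext i j
    simp [Matrix.add_apply, Matrix.sub_apply, Matrix.smul_apply]
    ring
  -- the Ψ-chain: Ψ = (1/2)∫h - (t³/12)C1 - (t⁴/24)C2 and its successive derivatives
  -- polynomial derivative helpers
  have poly3 : ∀ t : ℝ, HasDerivAt (fun t : ℝ => (t^3/12 : ℝ) • C1) (((t^2/4 : ℝ)) • C1) t := by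
    intro t
    have h := ((hasDerivAt_pow 3 t).div_const 12).smul_const C1
    refine h.congr_deriv ?_
    congr 1
    push_cast
    ring
  have poly4 : ∀ t : ℝ, HasDerivAt (fun t : ℝ => (t^4/24 : ℝ) • C2) (((t^3/6 : ℝ)) • C2) t := by
    intro t
    have h := ((hasDerivAt_pow 4 t).div_const 24).smul_const C2
    refine h.congr_deriv ?_
    congr 1
    push_cast
    ring
  have poly2a : ∀ t : ℝ, HasDerivAt (fun t : ℝ => (t^2/4 : ℝ) • C1) (((t/2 : ℝ)) • C1) t := by
    intro t
    have h := ((hasDerivAt_pow 2 t).div_const 4).smul_const C1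
    refine h.congr_deriv ?_
    congr 1
    push_cast
    ring
  have poly3a : ∀ t : ℝ, HasDerivAt (fun t : ℝ => (t^3/6 : ℝ) • C2) (((t^2/2 : ℝ)) • C2) t := by
    intro t
    have h := ((hasDerivAt_pow 3 t).div_const 6).smul_const C2
    refine h.congr_deriv ?_
    congr 1
    push_cast
    ring
  have poly1a : ∀ t : ℝ, HasDerivAt (fun t : ℝ => (t/2 : ℝ) • C1) (((2:ℝ)⁻¹) • C1) t := by
    intro t
    have h := ((hasDerivAt_id t).div_const 2).smul_const C1
    refine h.congr_deriv ?_
    norm_num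
  have poly2b : ∀ t : ℝ, HasDerivAt (fun t : ℝ => (t^2/2 : ℝ) • C2) ((t : ℝ) • C2) t := by
    intro t
    have h := ((hasDerivAt_pow 2 t).div_const 2).smul_const C2
    refine h.congr_deriv ?_
    congr 1
    push_cast
    ring
  have poly1b : ∀ t : ℝ, HasDerivAt (fun t : ℝ => (t : ℝ) • C2) (C2) t := by
    intro t
    have h := (hasDerivAt_id t).smul_const C2
    refine h.congr_deriv ?_
    simp

  -- Ψ chain derivatives
  have dΨ : ∀ t, HasDerivAt
      (fun u => (2:ℝ)⁻¹ • (∫ s in (0:ℝ)..u, (Q s * J s - J s * Q s))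
        - (u^3/12 : ℝ) • C1 - (u^4/24 : ℝ) • C2)
      ((2:ℝ)⁻¹ • (Q t * J t - J t * Q t) - (t^2/4 : ℝ) • C1 - (t^3/6 : ℝ) • C2) t := by
    intro t
    exact (((dp0 t).const_smul ((2:ℝ)⁻¹)).sub (poly3 t)).sub (poly4 t)
  have dψ0 : ∀ t, HasDerivAt
      (fun u => (2:ℝ)⁻¹ • (Q u * J u - J u * Q u) - (u^2/4 : ℝ) • C1 - (u^3/6 : ℝ) • C2)
      ((2:ℝ)⁻¹ • (Q1 t * J t - J t * Q1 t) - (t/2 : ℝ) • C1 - (t^2/2 : ℝ) • C2) t := by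
    intro t
    exact (((dh0 t).const_smul ((2:ℝ)⁻¹)).sub (poly2a t)).sub (poly3a t)
  have dψ1 : ∀ t, HasDerivAt
      (fun u => (2:ℝ)⁻¹ • (Q1 u * J u - J u * Q1 u) - (u/2 : ℝ) • C1 - (u^2/2 : ℝ) • C2)
      ((2:ℝ)⁻¹ • ((Q2 t * J t - J t * Q2 t) + (Q1 t * Q t - Q t * Q1 t))
        - (2:ℝ)⁻¹ • C1 - (t:ℝ) • C2) t := by
    intro t
    exact (((dh1 t).const_smul ((2:ℝ)⁻¹)).sub (poly1a t)).sub (poly2b t)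
  have dψ2 : ∀ t, HasDerivAt
      (fun u => (2:ℝ)⁻¹ • ((Q2 u * J u - J u * Q2 u) + (Q1 u * Q u - Q u * Q1 u))
        - (2:ℝ)⁻¹ • C1 - (u:ℝ) • C2)
      ((2:ℝ)⁻¹ • ((Q3 t * J t - J t * Q3 t) + (2:ℝ) • (Q2 t * Q t - Q t * Q2 t)) - C2) t := by
    intro t
    have h := (((dh2 t).const_smul ((2:ℝ)⁻¹)).sub (hasDerivAt_const t ((2:ℝ)⁻¹ • C1))).sub
      (poly1b t)
    refine h.congr_deriv ?_
    ext i j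
    simp [Matrix.add_apply, Matrix.sub_apply, Matrix.smul_apply]
  have dψ3 : ∀ t, HasDerivAt
      (fun u => (2:ℝ)⁻¹ • ((Q3 u * J u - J u * Q3 u) + (2:ℝ) • (Q2 u * Q u - Q u * Q2 u)) - C2)
      ((2:ℝ)⁻¹ • ((Q4 t * J t - J t * Q4 t) + (3:ℝ) • (Q3 t * Q t - Q t * Q3 t)
        + (2:ℝ) • (Q2 t * Q1 t - Q1 t * Q2 t))) t := by
    intro t
    have h := ((dh3 t).const_smul ((2:ℝ)⁻¹)).sub (hasDerivAt_const t C2)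
    refine h.congr_deriv ?_
    ext i j
    simp [Matrix.add_apply, Matrix.sub_apply, Matrix.smul_apply]
  -- ψ4 is O(1)
  have cψ4 : Continuous (fun t => (2:ℝ)⁻¹ • ((Q4 t * J t - J t * Q4 t)
      + (3:ℝ) • (Q3 t * Q t - Q t * Q3 t) + (2:ℝ) • (Q2 t * Q1 t - Q1 t * Q2 t))) := by
    exact ((((cQ4.matmul cJ).sub (cJ.matmul cQ4)).add
      (((cQ3.matmul cQ).sub (cQ.matmul cQ3)).const_smul (3:ℝ))).add
      (((cQ2.matmul cQ1).sub (cQ1.matmul cQ2)).const_smul (2:ℝ))).const_smul ((2:ℝ)⁻¹)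
  have O4 : (fun t => (2:ℝ)⁻¹ • ((Q4 t * J t - J t * Q4 t)
      + (3:ℝ) • (Q3 t * Q t - Q t * Q3 t) + (2:ℝ) • (Q2 t * Q1 t - Q1 t * Q2 t)))
      =O[𝓝 (0:ℝ)] fun t => t ^ 0 := by
    have : (fun t : ℝ => t ^ 0) = fun _ : ℝ => (1:ℝ) := by funext t; exact pow_zero t
    rw [this]
    exact (cψ4.continuousAt (x := 0)).isBigO_one ℝ
  -- chain of big-O steps
  have O3 : (fun t => (2:ℝ)⁻¹ • ((Q3 t * J t - J t * Q3 t)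
      + (2:ℝ) • (Q2 t * Q t - Q t * Q2 t)) - C2) =O[𝓝 (0:ℝ)] fun t => t ^ 1 := by
    refine isBigO_step dψ3 ?_ O4
    simp [hJ0]
    exact sub_self _
  have O2 : (fun t => (2:ℝ)⁻¹ • ((Q2 t * J t - J t * Q2 t) + (Q1 t * Q t - Q t * Q1 t))
      - (2:ℝ)⁻¹ • C1 - (t:ℝ) • C2) =O[𝓝 (0:ℝ)] fun t => t ^ 2 := by
    refine isBigO_step dψ2 ?_ O3
    simp [hJ0]
    exact sub_self _
  have O1 : (fun t => (2:ℝ)⁻¹ • (Q1 t * J t - J t * Q1 t) - (t/2 : ℝ) • C1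
      - (t^2/2 : ℝ) • C2) =O[𝓝 (0:ℝ)] fun t => t ^ 3 := by
    refine isBigO_step dψ1 ?_ O2
    simp [hJ0]
  have O0 : (fun t => (2:ℝ)⁻¹ • (Q t * J t - J t * Q t) - (t^2/4 : ℝ) • C1
      - (t^3/6 : ℝ) • C2) =O[𝓝 (0:ℝ)] fun t => t ^ 4 := by
    refine isBigO_step dψ0 ?_ O1
    simp [hJ0]
  have OΨ : (fun t => (2:ℝ)⁻¹ • (∫ s in (0:ℝ)..t, (Q s * J s - J s * Q s))
      - (t^3/12 : ℝ) • C1 - (t^4/24 : ℝ) • C2) =O[𝓝 (0:ℝ)] fun t => t ^ 5 := by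
    refine isBigO_step dΨ ?_ O0
    simp
  -- the w-chain (midpoint part)
  have dQh : ∀ t : ℝ, HasDerivAt (fun s : ℝ => Q (s/2)) ((2:ℝ)⁻¹ • Q1 (t/2)) t := by
    intro t
    have h := (dQ (t/2)).scomp t ((hasDerivAt_id t).div_const 2)
    simp only [one_div] at h
    exact h
  have dQ1h : ∀ t : ℝ, HasDerivAt (fun s : ℝ => Q1 (s/2)) ((2:ℝ)⁻¹ • Q2 (t/2)) t := by
    intro t
    have h := (dQ1 (t/2)).scomp t ((hasDerivAt_id t).div_const 2)
    simp only [one_div] at h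
    exact h
  have dQ2h : ∀ t : ℝ, HasDerivAt (fun s : ℝ => Q2 (s/2)) ((2:ℝ)⁻¹ • Q3 (t/2)) t := by
    intro t
    have h := (dQ2 (t/2)).scomp t ((hasDerivAt_id t).div_const 2)
    simp only [one_div] at h
    exact h
  have dw : ∀ t : ℝ, HasDerivAt
      (fun u => (Q1 (u/2) * Q (u/2) - Q (u/2) * Q1 (u/2)) - C1 - (u/2 : ℝ) • C2)
      ((2:ℝ)⁻¹ • (Q2 (t/2) * Q (t/2) - Q (t/2) * Q2 (t/2)) - (2:ℝ)⁻¹ • C2) t := by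
    intro t
    have h := ((((dQ1h t).matmul (dQh t)).sub ((dQh t).matmul (dQ1h t))).sub
      (hasDerivAt_const t C1)).sub (((hasDerivAt_id t).div_const 2).smul_const C2)
    refine h.congr_deriv ?_
    simp only [smul_mul_assoc, mul_smul_comm]
    ext i j
    simp [Matrix.add_apply, Matrix.sub_apply, Matrix.smul_apply]
    ring
  have dw1 : ∀ t : ℝ, HasDerivAt
      (fun u => (2:ℝ)⁻¹ • (Q2 (u/2) * Q (u/2) - Q (u/2) * Q2 (u/2)) - (2:ℝ)⁻¹ • C2)
      ((4:ℝ)⁻¹ • ((Q3 (t/2) * Q (t/2) - Q (t/2) * Q3 (t/2))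
        + (Q2 (t/2) * Q1 (t/2) - Q1 (t/2) * Q2 (t/2)))) t := by
    intro t
    have h := ((((dQ2h t).matmul (dQh t)).sub ((dQh t).matmul (dQ2h t))).const_smul
      ((2:ℝ)⁻¹)).sub (hasDerivAt_const t ((2:ℝ)⁻¹ • C2))
    refine h.congr_deriv ?_
    simp only [smul_mul_assoc, mul_smul_comm]
    ext i j
    simp [Matrix.add_apply, Matrix.sub_apply, Matrix.smul_apply]
    ring
  have cw2 : Continuous (fun t : ℝ => (4:ℝ)⁻¹ • ((Q3 (t/2) * Q (t/2) - Q (t/2) * Q3 (t/2))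
      + (Q2 (t/2) * Q1 (t/2) - Q1 (t/2) * Q2 (t/2)))) := by
    have hhalf : Continuous (fun t : ℝ => t/2) := continuous_id.div_const 2
    exact ((((cQ3.comp hhalf).matmul (cQ.comp hhalf)).sub
      ((cQ.comp hhalf).matmul (cQ3.comp hhalf))).add
      (((cQ2.comp hhalf).matmul (cQ1.comp hhalf)).sub
      ((cQ1.comp hhalf).matmul (cQ2.comp hhalf)))).const_smul ((4:ℝ)⁻¹)
  have Ow2 : (fun t : ℝ => (4:ℝ)⁻¹ • ((Q3 (t/2) * Q (t/2) - Q (t/2) * Q3 (t/2))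
      + (Q2 (t/2) * Q1 (t/2) - Q1 (t/2) * Q2 (t/2)))) =O[𝓝 (0:ℝ)] fun t => t ^ 0 := by
    have : (fun t : ℝ => t ^ 0) = fun _ : ℝ => (1:ℝ) := by funext t; exact pow_zero t
    rw [this]
    exact (cw2.continuousAt (x := 0)).isBigO_one ℝ
  have Ow1 : (fun t : ℝ => (2:ℝ)⁻¹ • (Q2 (t/2) * Q (t/2) - Q (t/2) * Q2 (t/2))
      - (2:ℝ)⁻¹ • C2) =O[𝓝 (0:ℝ)] fun t => t ^ 1 := by
    refine isBigO_step dw1 ?_ Ow2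
    norm_num
    exact sub_self _
  have Ow : (fun t : ℝ => (Q1 (t/2) * Q (t/2) - Q (t/2) * Q1 (t/2)) - C1 - (t/2 : ℝ) • C2)
      =O[𝓝 (0:ℝ)] fun t => t ^ 2 := by
    refine isBigO_step dw ?_ Ow1
    norm_num
    exact sub_self _
  -- tail : (t³/12) • w = O(t⁵)
  have hk : (fun t : ℝ => (t^3/12 : ℝ)) =O[𝓝 (0:ℝ)] fun t => t ^ 3 := by
    have := (isBigO_refl (fun t : ℝ => t ^ 3) (𝓝 (0:ℝ))).const_mul_left ((12:ℝ)⁻¹)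
    refine this.congr_left fun t => by ring
  have Otail : (fun t : ℝ => (t^3/12 : ℝ) •
        ((Q1 (t/2) * Q (t/2) - Q (t/2) * Q1 (t/2)) - C1 - (t/2 : ℝ) • C2))
      =O[𝓝 (0:ℝ)] fun t => t ^ 5 := by
    have h := hk.smul Ow
    refine h.trans (IsBigO.of_bound 1 ?_)
    filter_upwards with t
    simp [← pow_add]
  -- assemble
  have final := OΨ.sub Otail
  refine final.congr_left fun t => ?_
  rw [iteratedDeriv_one]
  have houter : (∫ t₁ in (0:ℝ)..t, ∫ t₂ in (0:ℝ)..t₁, (Q t₁ * Q t₂ - Q t₂ * Q t₁))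
      = ∫ s in (0:ℝ)..t, (Q s * J s - J s * Q s) := by
    apply intervalIntegral.integral_congr
    intro s _
    exact hInner s
  rw [houter]
  module
end
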